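/- arXiv:2001.05914 — 5 statements merged into one kernel-verified Lean document; each statement's English description precedes it below -/
import Mathlib

section
/- For fixed 0 < R' < R and κ > 0, there exists a constant C > 0 such that for all n, |h_n^{(1)}(κR)/h_n^{(1)}(κR')| ≤ C (R'/R)^n, where h_n^{(1)} is the spherical Hankel function of the first kind. -/
open Real MeasureTheory intervalIntegral Filter Topology

/-- The Bessel function of the first kind, defined by its power series
(`t^ν` interpreted via `Real.rpow`, valid for `t > 0`). -/
noncomputable def besselJ (ν : ℝ) (t : ℝ) : ℝ :=
  ∑' k : ℕ, ((-1 : ℝ) ^ k / (k.factorial * Real.Gamma (k + ν + 1))) *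
    (t / 2) ^ (2 * (k : ℝ) + ν)

/-- The spherical Bessel function of the first kind `j_n(t) = √(π/(2t)) J_{n+1/2}(t)`. -/
noncomputable def sphJ (n : ℕ) (t : ℝ) : ℝ :=
  Real.sqrt (Real.pi / (2 * t)) * besselJ ((n : ℝ) + 1 / 2) t

/-- The spherical Bessel function of the second kind
`y_n(t) = √(π/(2t)) Y_{n+1/2}(t) = (-1)^{n+1} √(π/(2t)) J_{-(n+1/2)}(t)`. -/
noncomputable def sphY (n : ℕ) (t : ℝ) : ℝ :=
  (-1 : ℝ) ^ (n + 1) * Real.sqrt (Real.pi / (2 * t)) * besselJ (-((n : ℝ) + 1 / 2)) t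

/-- The spherical Hankel function of the first kind `h_n^{(1)} = j_n + i y_n`. -/
noncomputable def sphH1 (n : ℕ) (t : ℝ) : ℂ := (sphJ n t : ℂ) + Complex.I * (sphY n t : ℂ)

/-- The spherical Hankel function of the second kind `h_n^{(2)} = j_n - i y_n`. -/
noncomputable def sphH2 (n : ℕ) (t : ℝ) : ℂ := (sphJ n t : ℂ) - Complex.I * (sphY n t : ℂ)

lemma tsum_pow_div_factorial (x : ℝ) : ∑' k : ℕ, x ^ k / (k.factorial : ℝ) = Real.exp x := by
  rw [Real.exp_eq_exp_ℝ, NormedSpace.exp_eq_tsum_div]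

lemma rpow_split {x : ℝ} (hx : 0 < x) (ν : ℝ) (k : ℕ) :
    x ^ (2 * (k : ℝ) + ν) = x ^ ν * (x ^ 2) ^ k := by
  rw [Real.rpow_add hx, mul_comm]
  congr 1
  rw [show (2 : ℝ) * (k : ℝ) = ((2 * k : ℕ) : ℝ) by push_cast; ring, Real.rpow_natCast, pow_mul]

lemma gamma_fact_le (ν : ℝ) (hν : 0 ≤ ν) (k : ℕ) :
    (k.factorial : ℝ) * Real.Gamma (ν + 1) ≤ Real.Gamma (k + ν + 1) := by
  induction k with
  | zero => simp
  | succ k ih =>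
      have h1 : ((k : ℝ) + ν + 1) ≠ 0 := by positivity
      have : Real.Gamma ((k + 1 : ℕ) + ν + 1) = ((k : ℝ) + ν + 1) * Real.Gamma (k + ν + 1) := by
        push_cast
        rw [show (k : ℝ) + 1 + ν + 1 = ((k : ℝ) + ν + 1) + 1 by ring, Real.Gamma_add_one h1]
      rw [this]
      have hk1 : ((k : ℝ) + 1) ≤ (k : ℝ) + ν + 1 := by linarith
      calc ((k + 1).factorial : ℝ) * Real.Gamma (ν + 1)
          = ((k : ℝ) + 1) * ((k.factorial : ℝ) * Real.Gamma (ν + 1)) := by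
            push_cast [Nat.factorial_succ]; ring
        _ ≤ ((k : ℝ) + ν + 1) * Real.Gamma (k + ν + 1) := by
            apply mul_le_mul hk1 ih (by positivity)
            positivity

lemma gamma_half_prod (m : ℕ) :
    Real.Gamma (m + 1/2) * Real.Gamma (1/2 - m) = (-1 : ℝ) ^ m * Real.pi := by
  induction m with
  | zero =>
      simp only [Nat.cast_zero, zero_add, sub_zero, pow_zero, one_mul]
      rw [Real.Gamma_one_half_eq]
      exact Real.mul_self_sqrt Real.pi_pos.le
  | succ m ih =>
      push_cast
      have h1 : ((m : ℝ) + 1/2) ≠ 0 := by positivity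
      have h2 : (-((m : ℝ) + 1/2)) ≠ 0 := neg_ne_zero.mpr h1
      have e1 : Real.Gamma ((m : ℝ) + 1 + 1/2) = ((m : ℝ) + 1/2) * Real.Gamma (m + 1/2) := by
        rw [show (m : ℝ) + 1 + 1/2 = ((m : ℝ) + 1/2) + 1 by ring, Real.Gamma_add_one h1]
      have e2 : Real.Gamma (1/2 - (m : ℝ)) = (-((m : ℝ) + 1/2)) * Real.Gamma (1/2 - ((m:ℝ) + 1)) := by
        rw [show (1/2 - (m : ℝ)) = (1/2 - ((m:ℝ) + 1)) + 1 by ring,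
          Real.Gamma_add_one (show (1/2 - ((m:ℝ)+1)) ≠ 0 by
            intro h; exact h2 (by linarith [h]))]
        ring_nf
      have e2' : Real.Gamma (1/2 - ((m:ℝ) + 1)) = Real.Gamma (1/2 - (m:ℝ)) / (-((m : ℝ) + 1/2)) := by
        rw [e2, mul_div_cancel_left₀ _ h2]
      have key : ∀ G1 G2 : ℝ, ((m:ℝ)+1/2) * G1 * (G2 / (-((m:ℝ)+1/2))) = -(G1*G2) := by
        intro G1 G2
        have h3 : ((m:ℝ)+1/2) * (G2 / ((m:ℝ)+1/2)) = G2 := by field_simp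
        rw [div_neg, mul_neg, mul_comm (((m:ℝ)+1/2)) G1, mul_assoc, h3]
      rw [e1, e2', key, ih, pow_succ]; ring

lemma gamma_ratio_le (k : ℕ) : ∀ n : ℕ, k ≤ n →
    (k.factorial : ℝ) * Real.Gamma ((n - k : ℕ) + 1/2) ≤ 2 ^ k * Real.Gamma (n + 1/2) := by
  induction k with
  | zero => intro n _; simp
  | succ k ih =>
      rintro (_ | n) hn
      · omega
      · have hkn : k ≤ n := by omega
        have e1 : ((n + 1 : ℕ) - (k + 1) : ℕ) = (n - k : ℕ) := by omega
        have h1 : ((n : ℝ) + 1/2) ≠ 0 := by positivity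
        have e2 : Real.Gamma ((n + 1 : ℕ) + 1/2) = ((n : ℝ) + 1/2) * Real.Gamma (n + 1/2) := by
          push_cast
          rw [show (n : ℝ) + 1 + 1/2 = ((n : ℝ) + 1/2) + 1 by ring, Real.Gamma_add_one h1]
        rw [e1, e2]
        have ihn := ih n hkn
        have hg : 0 < Real.Gamma (((n - k : ℕ) : ℝ) + 1/2) := Real.Gamma_pos_of_pos (by positivity)
        have hg2 : 0 < Real.Gamma ((n:ℝ) + 1/2) := Real.Gamma_pos_of_pos (by positivity)
        have hkn' : (k : ℝ) + 1 ≤ 2 * ((n:ℝ) + 1/2) := by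
          have : (k:ℝ) ≤ n := by exact_mod_cast hkn
          linarith
        calc ((k+1).factorial : ℝ) * Real.Gamma (((n - k : ℕ) : ℝ) + 1/2)
            = ((k:ℝ) + 1) * ((k.factorial : ℝ) * Real.Gamma (((n - k : ℕ) : ℝ) + 1/2)) := by
              push_cast [Nat.factorial_succ]; ring
          _ ≤ ((k:ℝ) + 1) * (2 ^ k * Real.Gamma ((n:ℝ) + 1/2)) := by
              apply mul_le_mul_of_nonneg_left ihn (by positivity)
          _ ≤ (2 * ((n:ℝ) + 1/2)) * (2 ^ k * Real.Gamma ((n:ℝ) + 1/2)) := by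
              apply mul_le_mul_of_nonneg_right hkn' (by positivity)
          _ = 2 ^ (k+1) * (((n:ℝ) + 1/2) * Real.Gamma ((n:ℝ) + 1/2)) := by ring

lemma neg_term_coeff (n k : ℕ) (hk : k ≤ n) :
    ((-1 : ℝ) ^ k / (k.factorial * Real.Gamma ((k:ℝ) + -((n:ℝ)+1/2) + 1)))
      = (-1:ℝ)^n * (Real.Gamma (((n-k:ℕ):ℝ) + 1/2) / (Real.pi * k.factorial)) := by
  have hcast : ((n-k:ℕ):ℝ) = (n:ℝ) - (k:ℝ) := by rw [Nat.cast_sub hk]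
  have harg : (k:ℝ) + -((n:ℝ)+1/2) + 1 = 1/2 - ((n-k:ℕ):ℝ) := by rw [hcast]; ring
  rw [harg]
  set s : ℝ := (-1:ℝ)^(n-k) with hs
  set G : ℝ := Real.Gamma (((n-k:ℕ):ℝ) + 1/2) with hG
  set G2 : ℝ := Real.Gamma (1/2 - ((n-k:ℕ):ℝ)) with hG2
  have gh : G * G2 = s * Real.pi := gamma_half_prod (n-k)
  have hsq : s * s = 1 := by
    rw [hs, ← pow_add]
    exact Even.neg_one_pow ⟨n-k, by ring⟩
  have hpow : ((-1:ℝ))^k * s = ((-1:ℝ))^n := by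
    rw [hs, ← pow_add]; congr 1; omega
  have hmul : G2 * (s * G / Real.pi) = 1 := by
    field_simp
    linear_combination s * gh + Real.pi * hsq
  have hmul' : (s * G / Real.pi) * G2 = 1 := by rw [mul_comm]; exact hmul
  have h1 : (1:ℝ)/G2 = s * G / Real.pi := (eq_one_div_of_mul_eq_one_left hmul').symm
  calc ((-1:ℝ))^k / (k.factorial * G2)
      = ((-1:ℝ))^k * ((1:ℝ)/G2) * (1/(k.factorial:ℝ)) := by ring
    _ = ((-1:ℝ))^k * (s * G / Real.pi) * (1/(k.factorial:ℝ)) := by rw [h1]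
    _ = (((-1:ℝ))^k * s) * (G / (Real.pi * k.factorial)) := by ring
    _ = (-1:ℝ)^n * (G / (Real.pi * k.factorial)) := by rw [hpow]

lemma Gamma_three_halves : Real.Gamma (3/2) = Real.sqrt Real.pi / 2 := by
  rw [show (3/2:ℝ) = 1/2 + 1 by norm_num, Real.Gamma_add_one (by norm_num),
    Real.Gamma_one_half_eq]
  ring

set_option maxHeartbeats 2000000 in

section
variable (ν t : ℝ)

lemma besselJ_term_abs (hν : 0 ≤ ν) (ht : 0 < t) (k : ℕ) :
    |((-1 : ℝ) ^ k / (k.factorial * Real.Gamma (k + ν + 1))) * (t / 2) ^ (2 * (k : ℝ) + ν)|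
      = (t/2) ^ ν * ((t/2)^2) ^ k / ((k.factorial : ℝ) * Real.Gamma (k + ν + 1)) := by
  have hx : (0:ℝ) < t/2 := by linarith
  have hg : (0:ℝ) < Real.Gamma (k + ν + 1) := Real.Gamma_pos_of_pos (by positivity)
  rw [abs_mul, abs_div, abs_pow, abs_neg, abs_one, one_pow,
    abs_of_pos (by positivity : (0:ℝ) < (k.factorial : ℝ) * Real.Gamma (k + ν + 1)),
    abs_of_pos (Real.rpow_pos_of_pos hx _), rpow_split hx]
  ring

lemma besselJ_pos_le (hν : 0 ≤ ν) (ht : 0 < t) :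
    |besselJ ν t| ≤ (t/2) ^ ν * Real.exp (t^2/4) / Real.Gamma (ν + 1) := by
  have hx : (0:ℝ) < t/2 := by linarith
  have hgν : (0:ℝ) < Real.Gamma (ν + 1) := Real.Gamma_pos_of_pos (by positivity)
  set f : ℕ → ℝ := fun k => ((-1 : ℝ) ^ k / (k.factorial * Real.Gamma (k + ν + 1))) *
    (t / 2) ^ (2 * (k : ℝ) + ν) with hf
  set g : ℕ → ℝ := fun k => ((t/2) ^ ν / Real.Gamma (ν + 1)) * (((t/2)^2) ^ k / k.factorial)
    with hg
  have hle : ∀ k, |f k| ≤ g k := by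
    intro k
    rw [hf, besselJ_term_abs ν t hν ht]
    have hΓ : Real.Gamma (ν + 1) ≤ Real.Gamma (k + ν + 1) := by
      have h1 := gamma_fact_le ν hν k
      have h2 : (1 : ℝ) ≤ (k.factorial : ℝ) := by exact_mod_cast k.factorial_pos
      nlinarith [hgν]
    have h2 : (1 : ℝ) ≤ (k.factorial : ℝ) := by exact_mod_cast k.factorial_pos
    show _ ≤ (t/2) ^ ν / Real.Gamma (ν + 1) * (((t/2)^2) ^ k / k.factorial)
    have e : (t/2) ^ ν / Real.Gamma (ν + 1) * (((t/2)^2) ^ k / k.factorial)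
        = (t/2) ^ ν * ((t/2)^2) ^ k / ((k.factorial : ℝ) * Real.Gamma (ν + 1)) := by
      field_simp
    rw [e]
    gcongr
  have hgsum : Summable g := ((Real.summable_pow_div_factorial ((t/2)^2)).mul_left _)
  have hfsum : Summable fun k => |f k| :=
    Summable.of_nonneg_of_le (fun k => abs_nonneg _) hle hgsum
  have h1 : |besselJ ν t| ≤ ∑' k, |f k| := by
    have := norm_tsum_le_tsum_norm (by simpa [Real.norm_eq_abs] using hfsum : Summable fun k => ‖f k‖)
    simpa [Real.norm_eq_abs, besselJ] using this
  have h2 : ∑' k, |f k| ≤ ∑' k, g k := Summable.tsum_le_tsum hle hfsum hgsum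
  have h3 : ∑' k, g k = (t/2) ^ ν * Real.exp (t^2/4) / Real.Gamma (ν + 1) := by
    rw [hg, tsum_mul_left, tsum_pow_div_factorial]
    rw [show ((t/2)^2 : ℝ) = t^2/4 by ring]
    ring
  linarith
end

set_option maxHeartbeats 2000000 in
lemma besselJ_neg_bounds (n : ℕ) (t : ℝ) (ht : 0 < t) :
    (|besselJ (-((n:ℝ) + 1/2)) t| ≤
        Real.exp (t^2/2) * (Real.Gamma ((n:ℝ)+1/2) / Real.pi * (t/2) ^ (-((n:ℝ)+1/2)))
        + 2 * (t/2) ^ ((n:ℝ)+3/2) * Real.exp (t^2/4) / (Real.sqrt Real.pi * (n+1).factorial))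
    ∧ (Real.Gamma ((n:ℝ)+1/2) / Real.pi * (t/2) ^ (-((n:ℝ)+1/2))
        - 2 * (t/2) ^ ((n:ℝ)+3/2) * Real.exp (t^2/4) / (Real.sqrt Real.pi * (n+1).factorial)
      ≤ |besselJ (-((n:ℝ) + 1/2)) t|) := by
  have hx : (0:ℝ) < t/2 := by linarith
  set x : ℝ := t/2 with hxdef
  set f : ℕ → ℝ := fun k => ((-1 : ℝ) ^ k / (k.factorial * Real.Gamma ((k:ℝ) + -((n:ℝ)+1/2) + 1))) *
      x ^ (2 * (k : ℝ) + -((n:ℝ)+1/2)) with hf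
  have hbes : besselJ (-((n:ℝ) + 1/2)) t = ∑' k, f k := rfl
  set B : ℝ := 2 * x ^ ((n:ℝ)+3/2) / (Real.sqrt Real.pi * (n+1).factorial) with hB
  have hBpos : 0 < B := by
    have := Real.sqrt_pos.mpr Real.pi_pos
    have : (0:ℝ) < ((n+1).factorial : ℝ) := by exact_mod_cast (n+1).factorial_pos
    rw [hB]
    positivity
  -- tail term bound
  have htail_term : ∀ m : ℕ, |f (m + (n+1))| ≤ B * ((x^2)^m / m.factorial) := by
    intro m
    have hargeq : ((m + (n+1) : ℕ):ℝ) + -((n:ℝ)+1/2) + 1 = (m:ℝ) + 3/2 := by push_cast; ring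
    have hΓpos : (0:ℝ) < Real.Gamma (((m + (n+1) : ℕ):ℝ) + -((n:ℝ)+1/2) + 1) := by
      rw [hargeq]; exact Real.Gamma_pos_of_pos (by positivity)
    have hxe : x ^ (2*((m+(n+1):ℕ):ℝ) + -((n:ℝ)+1/2)) = x^((n:ℝ)+3/2) * (x^2)^m := by
      rw [show 2*((m+(n+1):ℕ):ℝ) + -((n:ℝ)+1/2) = ((n:ℝ)+3/2) + 2*(m:ℝ) by push_cast; ring,
        Real.rpow_add hx]
      congr 1
      rw [show (2:ℝ)*(m:ℝ) = ((2*m:ℕ):ℝ) by push_cast; ring, Real.rpow_natCast, pow_mul]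
    have habs : |f (m + (n+1))| = x^((n:ℝ)+3/2) * (x^2)^m /
        (((m+(n+1)).factorial : ℝ) * Real.Gamma ((m:ℝ) + 3/2)) := by
      rw [hf]
      simp only
      rw [abs_mul, abs_div, abs_pow, abs_neg, abs_one, one_pow,
        abs_of_pos (show (0:ℝ) < ((m+(n+1)).factorial : ℝ) * Real.Gamma (((m + (n+1) : ℕ):ℝ) + -((n:ℝ)+1/2) + 1) by
          have : (0:ℝ) < ((m+(n+1)).factorial : ℝ) := by exact_mod_cast (m+(n+1)).factorial_pos
          positivity),
        abs_of_pos (Real.rpow_pos_of_pos hx _), hxe, hargeq]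
      ring
    rw [habs]
    -- denominator lower bound
    have hfacdvd : ((m.factorial * (n+1).factorial : ℕ) : ℝ) ≤ ((m+(n+1)).factorial : ℝ) := by
      exact_mod_cast Nat.le_of_dvd (m+(n+1)).factorial_pos
        (Nat.factorial_mul_factorial_dvd_factorial_add m (n+1))
    have hΓ32 : (m.factorial : ℝ) * Real.Gamma (3/2) ≤ Real.Gamma ((m:ℝ) + 3/2) := by
      have h := gamma_fact_le (1/2) (by norm_num) m
      rw [show (m:ℝ) + 3/2 = (m:ℝ) + 1/2 + 1 by ring, show (3/2:ℝ) = 1/2 + 1 by norm_num]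
      exact h
    have hΓ32' : Real.sqrt Real.pi / 2 ≤ Real.Gamma ((m:ℝ) + 3/2) := by
      have h1 : (1:ℝ) ≤ (m.factorial : ℝ) := by exact_mod_cast m.factorial_pos
      have h2 : (0:ℝ) < Real.Gamma (3/2) := Real.Gamma_pos_of_pos (by norm_num)
      nlinarith [Gamma_three_halves, hΓ32]
    have hden : ((n+1).factorial : ℝ) * (m.factorial : ℝ) * (Real.sqrt Real.pi / 2)
        ≤ ((m+(n+1)).factorial : ℝ) * Real.Gamma ((m:ℝ) + 3/2) := by
      have h1 : (0:ℝ) < ((n+1).factorial : ℝ) * (m.factorial : ℝ) := by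
        have := (n+1).factorial_pos; have := m.factorial_pos; positivity
      have h2 : ((n+1).factorial : ℝ) * (m.factorial : ℝ) ≤ ((m+(n+1)).factorial : ℝ) := by
        push_cast at hfacdvd ⊢; nlinarith [hfacdvd]
      have h3 : (0:ℝ) < Real.sqrt Real.pi / 2 := by positivity
      have h4 : Real.Gamma ((m:ℝ)+3/2) > 0 := Real.Gamma_pos_of_pos (by positivity)
      nlinarith [hΓ32']
    -- conclude
    have hnum : (0:ℝ) ≤ x^((n:ℝ)+3/2) * (x^2)^m := by positivity
    have e : B * ((x^2)^m / m.factorial) = x^((n:ℝ)+3/2) * (x^2)^m /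
        (((n+1).factorial : ℝ) * (m.factorial : ℝ) * (Real.sqrt Real.pi / 2)) := by
      rw [hB]
      have h1 : ((n+1).factorial : ℝ) ≠ 0 := by exact_mod_cast (n+1).factorial_pos.ne'
      have h2 : (m.factorial : ℝ) ≠ 0 := by exact_mod_cast m.factorial_pos.ne'
      have h3 : Real.sqrt Real.pi ≠ 0 := (Real.sqrt_pos.mpr Real.pi_pos).ne'
      field_simp
    rw [e]
    apply div_le_div_of_nonneg_left hnum
    · have := (n+1).factorial_pos; have := m.factorial_pos
      have h3 : (0:ℝ) < Real.sqrt Real.pi := Real.sqrt_pos.mpr Real.pi_pos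
      positivity
    · exact hden
  -- summability
  have hgsum : Summable (fun m : ℕ => B * ((x^2)^m / m.factorial)) :=
    (Real.summable_pow_div_factorial (x^2)).mul_left B
  have htailabs : Summable (fun m => |f (m + (n+1))|) :=
    Summable.of_nonneg_of_le (fun m => abs_nonneg _) htail_term hgsum
  have htail : Summable (fun m => f (m + (n+1))) := by
    have := htailabs
    rw [show (fun m => |f (m + (n+1))|) = fun m => ‖f (m + (n+1))‖ by
      funext m; rw [Real.norm_eq_abs]] at this
    exact this.of_norm
  have hsum : Summable f := (summable_nat_add_iff (n+1)).mp htail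
  have hsplit : (∑ k ∈ Finset.range (n+1), f k) + ∑' m, f (m + (n+1)) = ∑' k, f k :=
    Summable.sum_add_tsum_nat_add (n+1) hsum
  -- tail sum bound
  have hT : |∑' m, f (m + (n+1))| ≤ B * Real.exp (t^2/4) := by
    have h1 : |∑' m, f (m + (n+1))| ≤ ∑' m, |f (m + (n+1))| := by
      have := norm_tsum_le_tsum_norm (by
        simpa [Real.norm_eq_abs] using htailabs : Summable fun m => ‖f (m + (n+1))‖)
      simpa [Real.norm_eq_abs] using this
    have h2 : ∑' m, |f (m + (n+1))| ≤ ∑' m, B * ((x^2)^m / m.factorial) :=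
      Summable.tsum_le_tsum htail_term htailabs hgsum
    have h3 : ∑' m : ℕ, B * ((x^2)^m / m.factorial) = B * Real.exp (t^2/4) := by
      rw [tsum_mul_left, tsum_pow_div_factorial, show (x^2 : ℝ) = t^2/4 by rw [hxdef]; ring]
    linarith
  -- head sum
  set P : ℝ := ∑ k ∈ Finset.range (n+1),
      Real.Gamma (((n-k:ℕ):ℝ) + 1/2) / (Real.pi * k.factorial) * x ^ (2*(k:ℝ) + -((n:ℝ)+1/2))
    with hP
  have hH : (∑ k ∈ Finset.range (n+1), f k) = (-1:ℝ)^n * P := by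
    rw [hP, Finset.mul_sum]
    apply Finset.sum_congr rfl
    intro k hk
    have hkn : k ≤ n := by
      have := Finset.mem_range.mp hk; omega
    rw [hf]
    simp only
    rw [neg_term_coeff n k hkn]
    ring
  have hterm_nonneg : ∀ k ∈ Finset.range (n+1),
      0 ≤ Real.Gamma (((n-k:ℕ):ℝ) + 1/2) / (Real.pi * k.factorial) * x ^ (2*(k:ℝ) + -((n:ℝ)+1/2)) := by
    intro k _
    have h1 : (0:ℝ) < Real.Gamma (((n-k:ℕ):ℝ) + 1/2) := Real.Gamma_pos_of_pos (by positivity)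
    have h2 : (0:ℝ) < (k.factorial : ℝ) := by exact_mod_cast k.factorial_pos
    have h3 := Real.rpow_pos_of_pos hx (2*(k:ℝ) + -((n:ℝ)+1/2))
    have h4 := Real.pi_pos
    positivity
  have hPnonneg : 0 ≤ P := Finset.sum_nonneg hterm_nonneg
  have hP0 : Real.Gamma ((n:ℝ)+1/2) / Real.pi * x ^ (-((n:ℝ)+1/2)) ≤ P := by
    have h0 : (0:ℕ) ∈ Finset.range (n+1) := Finset.mem_range.mpr (by omega)
    have := Finset.single_le_sum hterm_nonneg h0
    have e0 : Real.Gamma (((n-0:ℕ):ℝ) + 1/2) / (Real.pi * (0:ℕ).factorial) * x ^ (2*((0:ℕ):ℝ) + -((n:ℝ)+1/2))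
        = Real.Gamma ((n:ℝ)+1/2) / Real.pi * x ^ (-((n:ℝ)+1/2)) := by
      norm_num
    rw [e0] at this
    exact this
  have hPup : P ≤ Real.Gamma ((n:ℝ)+1/2) / Real.pi * x ^ (-((n:ℝ)+1/2)) * Real.exp (t^2/2) := by
    have hΓν : (0:ℝ) < Real.Gamma ((n:ℝ)+1/2) := Real.Gamma_pos_of_pos (by positivity)
    have hxν := Real.rpow_pos_of_pos hx (-((n:ℝ)+1/2))
    have hle : ∀ k ∈ Finset.range (n+1),
        Real.Gamma (((n-k:ℕ):ℝ) + 1/2) / (Real.pi * k.factorial) * x ^ (2*(k:ℝ) + -((n:ℝ)+1/2))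
        ≤ (Real.Gamma ((n:ℝ)+1/2) / Real.pi * x ^ (-((n:ℝ)+1/2))) * ((2*x^2)^k / k.factorial) := by
      intro k hk
      have hkn : k ≤ n := by have := Finset.mem_range.mp hk; omega
      have hratio := gamma_ratio_le k n hkn
      have hfk : (0:ℝ) < (k.factorial : ℝ) := by exact_mod_cast k.factorial_pos
      have hfk1 : (1:ℝ) ≤ (k.factorial : ℝ) := by exact_mod_cast k.factorial_pos
      have hGnk : (0:ℝ) < Real.Gamma (((n-k:ℕ):ℝ) + 1/2) := Real.Gamma_pos_of_pos (by positivity)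
      have hG' : Real.Gamma (((n-k:ℕ):ℝ)+1/2) ≤ 2^k * Real.Gamma ((n:ℝ)+1/2) := by
        nlinarith [hratio, hfk1, hGnk]
      have e1 : (Real.Gamma ((n:ℝ)+1/2) / Real.pi * x ^ (-((n:ℝ)+1/2))) * ((2*x^2)^k / k.factorial)
          = (2^k * Real.Gamma ((n:ℝ)+1/2)) / (Real.pi * k.factorial) * (x ^ (-((n:ℝ)+1/2)) * (x^2)^k) := by
        rw [mul_pow]; ring
      rw [rpow_split hx (-((n:ℝ)+1/2)) k, e1]
      have hXpos : (0:ℝ) ≤ x ^ (-((n:ℝ)+1/2)) * (x^2)^k := by positivity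
      apply mul_le_mul_of_nonneg_right _ hXpos
      have hπ := Real.pi_pos
      have hd : (0:ℝ) < Real.pi * k.factorial := by positivity
      exact (div_le_div_iff_of_pos_right hd).mpr hG'
    calc P ≤ ∑ k ∈ Finset.range (n+1),
        (Real.Gamma ((n:ℝ)+1/2) / Real.pi * x ^ (-((n:ℝ)+1/2))) * ((2*x^2)^k / k.factorial) :=
          Finset.sum_le_sum hle
      _ = (Real.Gamma ((n:ℝ)+1/2) / Real.pi * x ^ (-((n:ℝ)+1/2))) *
          ∑ k ∈ Finset.range (n+1), ((2*x^2)^k / (k.factorial:ℝ)) := by rw [Finset.mul_sum]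
      _ ≤ (Real.Gamma ((n:ℝ)+1/2) / Real.pi * x ^ (-((n:ℝ)+1/2))) * Real.exp (t^2/2) := by
          apply mul_le_mul_of_nonneg_left _ (by positivity)
          rw [show (t^2/2 : ℝ) = 2*x^2 by rw [hxdef]; ring, ← tsum_pow_div_factorial (2*x^2)]
          exact Summable.sum_le_tsum (Finset.range (n+1)) (fun k _ => by positivity)
            (Real.summable_pow_div_factorial _)
  -- conclusion
  have hBe : B * Real.exp (t^2/4)
      = 2 * x ^ ((n:ℝ)+3/2) * Real.exp (t^2/4) / (Real.sqrt Real.pi * (n+1).factorial) := by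
    rw [hB]; ring
  have habsH : |(-1:ℝ)^n * P| = P := by
    rw [abs_mul, abs_pow, abs_neg, abs_one, one_pow, one_mul, abs_of_nonneg hPnonneg]
  rw [hbes, ← hsplit, hH]
  set T : ℝ := ∑' m, f (m + (n+1)) with hTdef
  constructor
  · calc |(-1:ℝ)^n * P + T| ≤ |(-1:ℝ)^n * P| + |T| := abs_add_le _ _
      _ = P + |T| := by rw [habsH]
      _ ≤ Real.exp (t^2/2) * (Real.Gamma ((n:ℝ)+1/2) / Real.pi * x ^ (-((n:ℝ)+1/2)))
          + 2 * x ^ ((n:ℝ)+3/2) * Real.exp (t^2/4) / (Real.sqrt Real.pi * (n+1).factorial) := by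
          rw [← hBe]; linarith [hPup, hT]
  · have h1 : |(-1:ℝ)^n * P| ≤ |(-1:ℝ)^n * P + T| + |T| := by
      have h := abs_add_le ((-1:ℝ)^n * P + T) (-T)
      simpa using h
    rw [habsH] at h1
    rw [← hBe]
    linarith [hP0, hT]

-- eventual factorial domination
lemma ev_fact (K y : ℝ) (hy : 0 ≤ y) :
    ∀ᶠ n : ℕ in atTop, K * y ^ n ≤ (n.factorial : ℝ) := by
  have h := FloorSemiring.tendsto_pow_div_factorial_atTop y
  have h2 : Filter.Tendsto (fun n : ℕ => K * (y ^ n / n.factorial)) atTop (nhds 0) := by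
    simpa using h.const_mul K
  have h3 := h2.eventually (eventually_le_nhds (by norm_num : (0:ℝ) < 1))
  filter_upwards [h3] with n hn
  have hf : (0:ℝ) < (n.factorial : ℝ) := by exact_mod_cast n.factorial_pos
  rw [mul_div_assoc'] at hn
  exact (div_le_one hf).mp hn

lemma gamma_low (n : ℕ) : Real.sqrt Real.pi * (n.factorial : ℝ) ≤ 2 ^ n * Real.Gamma ((n:ℝ) + 1/2) := by
  have h := gamma_ratio_le n n le_rfl
  rw [Nat.sub_self, Nat.cast_zero, zero_add, Real.Gamma_one_half_eq] at h
  linarith [h]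

lemma gamma2_low (n : ℕ) :
    Real.sqrt Real.pi * (n.factorial : ℝ) ≤ 2 ^ (n+1) * Real.Gamma (((n:ℝ) + 1/2) + 1) := by
  have hν : ((n:ℝ) + 1/2) ≠ 0 := by positivity
  rw [Real.Gamma_add_one hν, pow_succ]
  have h := gamma_low n
  have hΓ : (0:ℝ) < Real.Gamma ((n:ℝ) + 1/2) := Real.Gamma_pos_of_pos (by positivity)
  have : (1:ℝ)/2 ≤ (n:ℝ) + 1/2 := by
    have : (0:ℝ) ≤ n := Nat.cast_nonneg n
    linarith
  have hp : (0:ℝ) < 2^n := by positivity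
  nlinarith [h, mul_le_mul_of_nonneg_left (mul_le_mul_of_nonneg_right this hΓ.le) hp.le]

set_option maxHeartbeats 4000000 in
lemma sphH1_ev (R' R κ : ℝ) (hR' : 0 < R') (hRR : R' < R) (hκ : 0 < κ) :
    ∀ᶠ n : ℕ in atTop, ‖sphH1 n (κ*R) / sphH1 n (κ*R')‖
      ≤ (2 * Real.exp ((κ*R)^2/2) + 2) * (R'/R)^n := by
  have hR : 0 < R := lt_trans hR' hRR
  set a : ℝ := κ*R with hadef
  set b : ℝ := κ*R' with hbdef
  have ha : 0 < a := by positivity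
  have hb : 0 < b := by positivity
  have hba : b < a := by
    rw [hadef, hbdef]; exact (mul_lt_mul_iff_right₀ hκ).mpr hRR
  have hρ : b/a = R'/R := by rw [hadef, hbdef]; rw [mul_div_mul_left R' R hκ.ne']
  have hba0 : 0 < b/a := by positivity
  have hba1 : b/a < 1 := (div_lt_one ha).mpr hba
  have hπ := Real.pi_pos
  have hsπ : (0:ℝ) < Real.sqrt Real.pi := Real.sqrt_pos.mpr hπ
  set s : ℝ := Real.sqrt (b/a) with hsdef
  have hs : 0 < s := Real.sqrt_pos.mpr hba0
  have hs2 : s*s = b/a := Real.mul_self_sqrt hba0.le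
  set w : ℝ := a*b/4 with hwdef
  have hw : 0 < w := by positivity
  set sa : ℝ := Real.sqrt (Real.pi/(2*a)) with hsadef
  set sb : ℝ := Real.sqrt (Real.pi/(2*b)) with hsbdef
  have hsa : 0 < sa := Real.sqrt_pos.mpr (by positivity)
  have hsb : 0 < sb := Real.sqrt_pos.mpr (by positivity)
  have hsab : sa = sb * s := by
    rw [hsadef, hsbdef, hsdef, ← Real.sqrt_mul (by positivity) (b/a)]
    congr 1
    field_simp
  set K1 : ℝ := b^2 * Real.exp (b^2/4) with hK1
  set K2 : ℝ := 4 * s * Real.exp (a^2/4) * Real.sqrt w with hK2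
  set K3 : ℝ := 2 * a * s * Real.exp (a^2/4) * Real.sqrt w with hK3
  filter_upwards [ev_fact K1 (b^2/2) (by positivity), ev_fact K2 (a^2) (by positivity),
    ev_fact K3 (a^2) (by positivity)] with n h1 h2 h3
  set fn : ℝ := (n.factorial : ℝ) with hfn
  set Fn : ℝ := ((n+1).factorial : ℝ) with hFn
  have hfnpos : 0 < fn := by rw [hfn]; exact_mod_cast n.factorial_pos
  have hfn1 : 1 ≤ fn := by rw [hfn]; exact_mod_cast n.factorial_pos
  have hFnfn : fn ≤ Fn := by
    rw [hfn, hFn]; exact_mod_cast Nat.factorial_le (Nat.le_succ n)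
  have hFnpos : 0 < Fn := lt_of_lt_of_le hfnpos hFnfn
  set G1 : ℝ := Real.Gamma ((n:ℝ)+1/2) with hG1def
  set G2 : ℝ := Real.Gamma (((n:ℝ)+1/2)+1) with hG2def
  have hG1pos : 0 < G1 := by rw [hG1def]; exact Real.Gamma_pos_of_pos (by positivity)
  have hG2pos : 0 < G2 := by rw [hG2def]; exact Real.Gamma_pos_of_pos (by positivity)
  have hG1 : Real.sqrt Real.pi * fn ≤ 2^n * G1 := gamma_low n
  have hG2 : Real.sqrt Real.pi * fn ≤ 2^(n+1) * G2 := gamma2_low n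
  have ha2 : (0:ℝ) < a/2 := by linarith
  have hb2 : (0:ℝ) < b/2 := by linarith
  set pa : ℝ := (a/2) ^ ((n:ℝ)+1/2) with hpadef
  set pb : ℝ := (b/2) ^ ((n:ℝ)+1/2) with hpbdef
  have hpa : 0 < pa := by rw [hpadef]; exact Real.rpow_pos_of_pos ha2 _
  have hpb : 0 < pb := by rw [hpbdef]; exact Real.rpow_pos_of_pos hb2 _
  have hpainv : (a/2) ^ (-((n:ℝ)+1/2)) = pa⁻¹ := by rw [Real.rpow_neg ha2.le, hpadef]
  have hpbinv : (b/2) ^ (-((n:ℝ)+1/2)) = pb⁻¹ := by rw [Real.rpow_neg hb2.le, hpbdef]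
  have hpa3 : (a/2) ^ ((n:ℝ)+3/2) = pa * (a/2) := by
    rw [show (n:ℝ)+3/2 = ((n:ℝ)+1/2)+1 by ring, Real.rpow_add ha2, Real.rpow_one, hpadef]
  have hpb3 : (b/2) ^ ((n:ℝ)+3/2) = pb * (b/2) := by
    rw [show (n:ℝ)+3/2 = ((n:ℝ)+1/2)+1 by ring, Real.rpow_add hb2, Real.rpow_one, hpbdef]
  have hpbpb : pb * pb = (b^2/4)^n * (b/2) := by
    rw [hpbdef, ← Real.rpow_add hb2,
      show ((n:ℝ)+1/2)+((n:ℝ)+1/2) = ((2*n+1 : ℕ):ℝ) by push_cast; ring,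
      Real.rpow_natCast, pow_succ, pow_mul, show ((b/2)^2 : ℝ) = b^2/4 by ring]
  have hpapb : pa * pb = w^n * Real.sqrt w := by
    rw [hpadef, hpbdef, ← Real.mul_rpow ha2.le hb2.le,
      show (a/2)*(b/2) = w by rw [hwdef]; ring,
      Real.rpow_add hw, Real.rpow_natCast, ← Real.sqrt_eq_rpow]
  have hbar : (b/a : ℝ)^((n:ℝ)+1/2) = (b/a)^n * s := by
    rw [Real.rpow_add hba0, Real.rpow_natCast, ← Real.sqrt_eq_rpow, hsdef]
  have hpab : pb = pa * ((b/a)^n * s) := by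
    rw [← hbar, hpadef, hpbdef, ← Real.mul_rpow ha2.le hba0.le,
      show (a/2)*(b/a) = b/2 by field_simp]
  have h2npos : (0:ℝ) < 2^n := by positivity
  have h4npos : (0:ℝ) < 4^n := by positivity
  set M : ℝ := G1/Real.pi * pb⁻¹ with hM
  have hMpos : 0 < M := by rw [hM]; positivity
  set eb : ℝ := Real.exp (b^2/4) with heb
  set ea4 : ℝ := Real.exp (a^2/4) with hea4
  set ea2 : ℝ := Real.exp (a^2/2) with hea2
  have hebpos : 0 < eb := by rw [heb]; exact Real.exp_pos _
  have hea4pos : 0 < ea4 := by rw [hea4]; exact Real.exp_pos _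
  have hea2pos : 0 < ea2 := by rw [hea2]; exact Real.exp_pos _
  have hππ : Real.sqrt Real.pi*Real.sqrt Real.pi = Real.pi := Real.mul_self_sqrt hπ.le
  -- E1 : tail at b is at most M/2
  have hE1 : 2*(b/2)^((n:ℝ)+3/2)*eb/(Real.sqrt Real.pi*Fn) ≤ M/2 := by
    rw [hpb3]
    have hLeq : 2*(pb*(b/2))*eb/(Real.sqrt Real.pi*Fn)
        = (2*(b/2)*eb*pb)/(Real.sqrt Real.pi*Fn) := by ring
    have hReq : M/2 = G1/(2*Real.pi*pb) := by
      rw [hM]; field_simp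
    rw [hLeq, hReq, div_le_div_iff₀ (by positivity) (by positivity)]
    have step1 : b^2*eb*(b^2/4)^n*2^n ≤ fn*fn := by
      have hid : ((b^2/4)^n : ℝ)*2^n = (b^2/2)^n := by rw [← mul_pow]; ring_nf
      calc b^2*eb*(b^2/4)^n*2^n = K1*((b^2/4)^n*2^n) := by rw [hK1, heb]; ring
        _ = K1*(b^2/2)^n := by rw [hid]
        _ ≤ fn := h1
        _ ≤ fn*fn := le_mul_of_one_le_left hfnpos.le hfn1
    have step2 : Real.pi*fn*fn ≤ 2^n*(G1*(Real.sqrt Real.pi*Fn)) := by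
      have hmm := mul_le_mul hG1 (mul_le_mul_of_nonneg_left hFnfn hsπ.le)
        (by positivity) (by positivity)
      have he : (Real.sqrt Real.pi*fn)*(Real.sqrt Real.pi*fn) = Real.pi*fn*fn := by
        rw [show (Real.sqrt Real.pi*fn)*(Real.sqrt Real.pi*fn)
          = (Real.sqrt Real.pi*Real.sqrt Real.pi)*(fn*fn) by ring, hππ]; ring
      calc Real.pi*fn*fn = (Real.sqrt Real.pi*fn)*(Real.sqrt Real.pi*fn) := he.symm
        _ ≤ (2^n*G1)*(Real.sqrt Real.pi*Fn) := hmm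
        _ = 2^n*(G1*(Real.sqrt Real.pi*Fn)) := by ring
    calc 2*(b/2)*eb*pb*(2*Real.pi*pb) = (4*Real.pi*(b/2)*eb)*(pb*pb) := by ring
      _ = (4*Real.pi*(b/2)*eb)*((b^2/4)^n*(b/2)) := by rw [hpbpb]
      _ = Real.pi*(b^2*eb*(b^2/4)^n) := by ring
      _ ≤ Real.pi*(fn*fn/2^n) := by
          apply mul_le_mul_of_nonneg_left _ hπ.le
          rw [le_div_iff₀ h2npos]
          linarith only [step1]
      _ ≤ G1*(Real.sqrt Real.pi*Fn) := by
          rw [show Real.pi*(fn*fn/2^n) = Real.pi*fn*fn/2^n by ring, div_le_iff₀ h2npos]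
          linarith only [step2]
  -- E2 : first numerator piece
  have hE2 : sa*(pa*ea4/G2) ≤ 1/2*((b/a)^n*(sb*M)) := by
    have hLeq : sa*(pa*ea4/G2) = (sb*s*pa*ea4)/G2 := by rw [hsab]; ring
    have hReq : 1/2*((b/a)^n*(sb*M)) = ((b/a)^n*sb*G1)/(2*Real.pi*pb) := by
      rw [hM]; field_simp
    rw [hLeq, hReq, div_le_div_iff₀ hG2pos (by positivity)]
    have hidw : (w : ℝ) = (a^2/4)*(b/a) := by rw [hwdef]; field_simp
    have hwn : (w:ℝ)^n = (a^2/4)^n*(b/a)^n := by rw [hidw, mul_pow]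
    have step1 : 4*s*ea4*Real.sqrt w*((a^2/4)^n*4^n) ≤ fn*fn := by
      have hid : ((a^2/4)^n : ℝ)*4^n = (a^2)^n := by rw [← mul_pow]; ring_nf
      calc 4*s*ea4*Real.sqrt w*((a^2/4)^n*4^n) = K2*(a^2)^n := by rw [hK2, hea4, hid]
        _ ≤ fn := h2
        _ ≤ fn*fn := le_mul_of_one_le_left hfnpos.le hfn1
    have step2 : Real.pi*fn*fn ≤ 2^n*2^(n+1)*(G1*G2) := by
      have hmm := mul_le_mul hG1 hG2 (by positivity) (by positivity)
      have he : (Real.sqrt Real.pi*fn)*(Real.sqrt Real.pi*fn) = Real.pi*fn*fn := by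
        rw [show (Real.sqrt Real.pi*fn)*(Real.sqrt Real.pi*fn)
          = (Real.sqrt Real.pi*Real.sqrt Real.pi)*(fn*fn) by ring, hππ]; ring
      calc Real.pi*fn*fn = (Real.sqrt Real.pi*fn)*(Real.sqrt Real.pi*fn) := he.symm
        _ ≤ (2^n*G1)*(2^(n+1)*G2) := hmm
        _ = 2^n*2^(n+1)*(G1*G2) := by ring
    have h2id : ((2:ℝ)^n*2^(n+1)) = 2*4^n := by
      rw [pow_succ, show ((4:ℝ))^n = (2*2)^n by norm_num, mul_pow]; ring
    rw [h2id] at step2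
    calc sb*s*pa*ea4*(2*Real.pi*pb) = 2*Real.pi*sb*(s*ea4*(pa*pb)) := by ring
      _ = 2*Real.pi*sb*(s*ea4*(w^n*Real.sqrt w)) := by rw [hpapb]
      _ = (b/a)^n*sb*(2*Real.pi*(s*ea4*Real.sqrt w*(a^2/4)^n)) := by rw [hwn]; ring
      _ ≤ (b/a)^n*sb*(G1*G2) := by
          apply mul_le_mul_of_nonneg_left _ (by positivity)
          have hq : s*ea4*Real.sqrt w*(a^2/4)^n ≤ fn*fn/(4*4^n) := by
            rw [le_div_iff₀ (by positivity)]
            have hXpos : (0:ℝ) ≤ s*ea4*Real.sqrt w*(a^2/4)^n*4^n := by positivity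
            nlinarith only [step1]
          calc 2*Real.pi*(s*ea4*Real.sqrt w*(a^2/4)^n) ≤ 2*Real.pi*(fn*fn/(4*4^n)) := by
                apply mul_le_mul_of_nonneg_left hq (by positivity)
            _ = Real.pi*fn*fn/(2*4^n) := by ring
            _ ≤ G1*G2 := by
                rw [div_le_iff₀ (by positivity)]
                linarith only [step2]
      _ = (b/a)^n*sb*G1*G2 := by ring
  -- E3 : third numerator piece
  have hE3 : sa*(2*(pa*(a/2))*ea4/(Real.sqrt Real.pi*Fn)) ≤ 1/2*((b/a)^n*(sb*M)) := by
    have hLeq : sa*(2*(pa*(a/2))*ea4/(Real.sqrt Real.pi*Fn))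
        = (sb*s*pa*a*ea4)/(Real.sqrt Real.pi*Fn) := by rw [hsab]; ring
    have hReq : 1/2*((b/a)^n*(sb*M)) = ((b/a)^n*sb*G1)/(2*Real.pi*pb) := by
      rw [hM]; field_simp
    rw [hLeq, hReq, div_le_div_iff₀ (by positivity) (by positivity)]
    have hidw : (w : ℝ) = (a^2/4)*(b/a) := by rw [hwdef]; field_simp
    have hwn : (w:ℝ)^n = (a^2/4)^n*(b/a)^n := by rw [hidw, mul_pow]
    have step1 : 2*a*s*ea4*Real.sqrt w*((a^2/4)^n*2^n) ≤ fn*fn := by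
      have hle2 : ((a^2/4)^n : ℝ)*2^n ≤ (a^2)^n := by
        rw [← mul_pow]
        apply pow_le_pow_left₀ (by positivity)
        linarith only [sq_nonneg a]
      calc 2*a*s*ea4*Real.sqrt w*((a^2/4)^n*2^n) ≤ K3*(a^2)^n := by
            rw [hK3, hea4]
            apply mul_le_mul_of_nonneg_left hle2 (by positivity)
        _ ≤ fn := h3
        _ ≤ fn*fn := le_mul_of_one_le_left hfnpos.le hfn1
    have step2 : Real.pi*fn*fn ≤ 2^n*(G1*(Real.sqrt Real.pi*Fn)) := by
      have hmm := mul_le_mul hG1 (mul_le_mul_of_nonneg_left hFnfn hsπ.le)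
        (by positivity) (by positivity)
      have he : (Real.sqrt Real.pi*fn)*(Real.sqrt Real.pi*fn) = Real.pi*fn*fn := by
        rw [show (Real.sqrt Real.pi*fn)*(Real.sqrt Real.pi*fn)
          = (Real.sqrt Real.pi*Real.sqrt Real.pi)*(fn*fn) by ring, hππ]; ring
      calc Real.pi*fn*fn = (Real.sqrt Real.pi*fn)*(Real.sqrt Real.pi*fn) := he.symm
        _ ≤ (2^n*G1)*(Real.sqrt Real.pi*Fn) := hmm
        _ = 2^n*(G1*(Real.sqrt Real.pi*Fn)) := by ring
    calc sb*s*pa*a*ea4*(2*Real.pi*pb) = 2*Real.pi*sb*(a*s*ea4*(pa*pb)) := by ring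
      _ = 2*Real.pi*sb*(a*s*ea4*(w^n*Real.sqrt w)) := by rw [hpapb]
      _ = (b/a)^n*sb*(Real.pi*(2*a*s*ea4*Real.sqrt w*(a^2/4)^n)) := by rw [hwn]; ring
      _ ≤ (b/a)^n*sb*(G1*(Real.sqrt Real.pi*Fn)) := by
          apply mul_le_mul_of_nonneg_left _ (by positivity)
          have hq : 2*a*s*ea4*Real.sqrt w*(a^2/4)^n ≤ fn*fn/2^n := by
            rw [le_div_iff₀ h2npos]
            linarith only [step1]
          calc Real.pi*(2*a*s*ea4*Real.sqrt w*(a^2/4)^n) ≤ Real.pi*(fn*fn/2^n) := by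
                apply mul_le_mul_of_nonneg_left hq hπ.le
            _ = Real.pi*fn*fn/2^n := by ring
            _ ≤ G1*(Real.sqrt Real.pi*Fn) := by
                rw [div_le_iff₀ h2npos]
                linarith only [step2]
      _ = (b/a)^n*sb*G1*(Real.sqrt Real.pi*Fn) := by ring
  -- U2 pointwise bound
  have hU2 : sa*(ea2*(G1/Real.pi*pa⁻¹)) ≤ ea2*((b/a)^n*(sb*M)) := by
    have key : sa*pa⁻¹ ≤ (b/a)^n*(sb*pb⁻¹) := by
      rw [show sa*pa⁻¹ = sa/pa by ring, show (b/a)^n*(sb*pb⁻¹) = ((b/a)^n*sb)/pb by ring,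
        div_le_div_iff₀ hpa hpb]
      have hX : (0:ℝ) ≤ sb*pa*(b/a)^n := by positivity
      have hmono := mul_le_of_le_one_right hX hba1.le
      calc sa*pb = sb*pa*((b/a)^n*(s*s)) := by rw [hsab, hpab]; ring
        _ = (sb*pa*(b/a)^n)*(b/a) := by rw [hs2]; ring
        _ ≤ sb*pa*(b/a)^n := hmono
        _ = (b/a)^n*sb*pa := by ring
    calc sa*(ea2*(G1/Real.pi*pa⁻¹)) = (ea2*G1/Real.pi)*(sa*pa⁻¹) := by ring
      _ ≤ (ea2*G1/Real.pi)*((b/a)^n*(sb*pb⁻¹)) := by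
          apply mul_le_mul_of_nonneg_left key (by positivity)
      _ = ea2*((b/a)^n*(sb*M)) := by rw [hM]; ring
  -- numerator bound
  have hnum : ‖sphH1 n a‖ ≤
      sa*(pa*ea4/G2) + (sa*(ea2*(G1/Real.pi*pa⁻¹)) + sa*(2*(pa*(a/2))*ea4/(Real.sqrt Real.pi*Fn))) := by
    have htri : ‖sphH1 n a‖ ≤ |sphJ n a| + |sphY n a| := by
      rw [sphH1]
      refine (norm_add_le _ _).trans ?_
      rw [Complex.norm_real, norm_mul, Complex.norm_I, Complex.norm_real, one_mul, Real.norm_eq_abs, Real.norm_eq_abs]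
    have hsphJ : |sphJ n a| ≤ sa*(pa*ea4/G2) := by
      have hJ := besselJ_pos_le ((n:ℝ)+1/2) a (by positivity) ha
      rw [← hpadef, ← hea4, ← hG2def] at hJ
      rw [sphJ, abs_mul, abs_of_nonneg (Real.sqrt_nonneg _), ← hsadef]
      exact mul_le_mul_of_nonneg_left hJ hsa.le
    have hsphY : |sphY n a| ≤ sa*(ea2*(G1/Real.pi*pa⁻¹)) + sa*(2*(pa*(a/2))*ea4/(Real.sqrt Real.pi*Fn)) := by
      have hNa := (besselJ_neg_bounds n a ha).1
      rw [hpainv, hpa3, ← hG1def, ← hea2, ← hea4, ← hFn] at hNa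
      rw [sphY, abs_mul, abs_mul, abs_pow, abs_neg, abs_one, one_pow, one_mul,
        abs_of_nonneg (Real.sqrt_nonneg _), ← hsadef]
      calc sa * |besselJ (-((n:ℝ)+1/2)) a|
          ≤ sa * (ea2*(G1/Real.pi*pa⁻¹) + 2*(pa*(a/2))*ea4/(Real.sqrt Real.pi*Fn)) :=
            mul_le_mul_of_nonneg_left hNa hsa.le
        _ = sa*(ea2*(G1/Real.pi*pa⁻¹)) + sa*(2*(pa*(a/2))*ea4/(Real.sqrt Real.pi*Fn)) := by ring
    linarith only [htri, hsphJ, hsphY]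
  -- denominator bound
  have hden : sb*(M/2) ≤ ‖sphH1 n b‖ := by
    have hNb := (besselJ_neg_bounds n b hb).2
    rw [hpbinv, hpb3, ← hG1def, ← heb, ← hFn] at hNb
    have him : (sphH1 n b).im = sphY n b := by simp [sphH1]
    have h1' : |sphY n b| ≤ ‖sphH1 n b‖ := by
      rw [← him]; exact Complex.abs_im_le_norm _
    rw [← hM] at hNb
    have hYb : sb*(M - 2*(pb*(b/2))*eb/(Real.sqrt Real.pi*Fn)) ≤ |sphY n b| := by
      rw [sphY, abs_mul, abs_mul, abs_pow, abs_neg, abs_one, one_pow, one_mul,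
        abs_of_nonneg (Real.sqrt_nonneg _), ← hsbdef]
      exact mul_le_mul_of_nonneg_left hNb hsb.le
    have hME : M/2 ≤ M - 2*(pb*(b/2))*eb/(Real.sqrt Real.pi*Fn) := by
      have h := hE1
      rw [hpb3] at h
      linarith only [h]
    calc sb*(M/2) ≤ sb*(M - 2*(pb*(b/2))*eb/(Real.sqrt Real.pi*Fn)) :=
          mul_le_mul_of_nonneg_left hME hsb.le
      _ ≤ |sphY n b| := hYb
      _ ≤ ‖sphH1 n b‖ := h1'
  -- conclude
  have hdenpos : 0 < sb*(M/2) := by positivity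
  rw [norm_div]
  have hnumnonneg : (0:ℝ) ≤ sa*(pa*ea4/G2) + (sa*(ea2*(G1/Real.pi*pa⁻¹)) + sa*(2*(pa*(a/2))*ea4/(Real.sqrt Real.pi*Fn))) :=
    le_trans (norm_nonneg _) hnum
  have hqle := div_le_div₀ hnumnonneg hnum hdenpos hden
  refine le_trans hqle ?_
  rw [← hρ, div_le_iff₀ hdenpos]
  linarith only [hE2, hU2, hE3]

/-- For fixed `0 < R' < R` and `κ > 0`, the quotient of spherical Hankel functions
satisfies `|h_n^{(1)}(κR) / h_n^{(1)}(κR')| ≤ C (R'/R)^n` uniformly in `n`. -/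
theorem sphH1_quotient_bound (R' R κ : ℝ) (hR' : 0 < R') (hRR : R' < R) (hκ : 0 < κ) :
    ∃ C > 0, ∀ n : ℕ,
      ‖sphH1 n (κ * R) / sphH1 n (κ * R')‖ ≤ C * (R' / R) ^ n := by
  have hR : 0 < R := lt_trans hR' hRR
  have hev := sphH1_ev R' R κ hR' hRR hκ
  rw [eventually_atTop] at hev
  obtain ⟨N, hN⟩ := hev
  set C0 : ℝ := 2*Real.exp ((κ*R)^2/2) + 2 with hC0
  have hC0pos : 0 < C0 := by rw [hC0]; positivity
  set q : ℕ → ℝ := fun n => ‖sphH1 n (κ*R) / sphH1 n (κ*R')‖ with hq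
  set S : ℝ := ∑ k ∈ Finset.range N, q k * (R/R')^k with hS
  have hterm : ∀ k ∈ Finset.range N, 0 ≤ q k * (R/R')^k := by
    intro k _
    apply mul_nonneg (norm_nonneg _) (by positivity)
  have hSnonneg : 0 ≤ S := Finset.sum_nonneg hterm
  refine ⟨C0 + S, by positivity, ?_⟩
  intro n
  show q n ≤ (C0 + S) * (R'/R)^n
  have hρpos : (0:ℝ) < R'/R := by positivity
  by_cases hn : N ≤ n
  · calc q n ≤ C0 * (R'/R)^n := hN n hn
      _ ≤ (C0 + S)*(R'/R)^n := by
        apply mul_le_mul_of_nonneg_right (by linarith) (by positivity)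
  · push_neg at hn
    have hmem : n ∈ Finset.range N := Finset.mem_range.mpr hn
    have hsingle : q n * (R/R')^n ≤ S := Finset.single_le_sum hterm hmem
    have hid : q n = (q n * (R/R')^n) * (R'/R)^n := by
      rw [mul_assoc, ← mul_pow]
      have h1 : (R/R')*(R'/R) = 1 := by field_simp
      rw [h1, one_pow, mul_one]
    rw [hid]
    calc (q n * (R/R')^n) * (R'/R)^n ≤ S * (R'/R)^n :=
          mul_le_mul_of_nonneg_right hsingle (by positivity)
      _ ≤ (C0+S)*(R'/R)^n := mul_le_mul_of_nonneg_right (by linarith) (by positivity)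
end

section
/- Let ζ ∈ C^1([R', R]) with 0 < R' < R, and let n be a nonnegative integer. Then (1+n²)^{1/2} |ζ(R)|² ≤ C ∫_{R'}^R ((1+n²)|ζ(r)|² + |ζ'(r)|²) dr for a constant C depending only on R and R' (not on n or ζ). -/
open Real MeasureTheory intervalIntegral Filter Topology

/-- For `ζ ∈ C¹([R',R])` with `0 < R' < R` and any nonnegative integer `n`,
`(1+n²)^{1/2} |ζ(R)|² ≤ C ∫_{R'}^R ((1+n²)|ζ(r)|² + |ζ'(r)|²) dr`
with `C` depending only on `R` and `R'`. -/
theorem trace_coefficient_bound (R' R : ℝ) (hR' : 0 < R') (hRR : R' < R) :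
    ∃ C > 0, ∀ (n : ℕ) (ζ ζ' : ℝ → ℂ),
      (∀ r ∈ Set.Icc R' R, HasDerivAt ζ (ζ' r) r) →
      ContinuousOn ζ' (Set.Icc R' R) →
      (1 + (n : ℝ) ^ 2) ^ ((1 : ℝ) / 2) * ‖ζ R‖ ^ 2 ≤
        C * ∫ r in R'..R, ((1 + (n : ℝ) ^ 2) * ‖ζ r‖ ^ 2 + ‖ζ' r‖ ^ 2) := by
  have hsub : (0:ℝ) < R - R' := sub_pos.2 hRR
  refine ⟨1 + (R - R')⁻¹, by positivity, ?_⟩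
  intro n ζ ζ' hζ hζ'c
  rw [← Real.sqrt_eq_rpow]
  have huIcc : Set.uIcc R' R = Set.Icc R' R := Set.uIcc_of_le hRR.le
  set lam : ℝ := Real.sqrt (1 + (n:ℝ)^2) with hlamdef
  have hone : (1:ℝ) ≤ 1 + (n:ℝ)^2 := le_add_of_nonneg_right (by positivity)
  have hlamsq : lam ^ 2 = 1 + (n:ℝ)^2 := Real.sq_sqrt (by positivity)
  have hlam1 : 1 ≤ lam := by
    nlinarith [Real.sqrt_nonneg (1 + (n:ℝ)^2), hlamsq, hone]
  have hlampos : 0 < lam := lt_of_lt_of_le one_pos hlam1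
  have hζc : ContinuousOn ζ (Set.Icc R' R) := fun r hr =>
    ((hζ r hr).continuousAt).continuousWithinAt
  set g : ℝ → ℝ := fun r => ‖ζ r‖ ^ 2 with hgdef
  set g' : ℝ → ℝ := fun r => 2 * Inner.inner ℝ (ζ r) (ζ' r) with hg'def
  have hg : ∀ r ∈ Set.Icc R' R, HasDerivAt g (g' r) r := fun r hr => (hζ r hr).norm_sq
  have hgc : ContinuousOn g (Set.Icc R' R) := (hζc.norm).pow 2
  have hg'c : ContinuousOn g' (Set.Icc R' R) :=
    continuous_const.continuousOn.mul (hζc.inner hζ'c)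
  set b : ℝ → ℝ := fun r => lam * ‖ζ r‖ ^ 2 + lam⁻¹ * ‖ζ' r‖ ^ 2 with hbdef
  have hbc : ContinuousOn b (Set.Icc R' R) :=
    (continuous_const.continuousOn.mul ((hζc.norm).pow 2)).add
      (continuous_const.continuousOn.mul ((hζ'c.norm).pow 2))
  have hbnonneg : ∀ r, 0 ≤ b r := fun r => by
    have : 0 < lam⁻¹ := inv_pos.2 hlampos
    positivity
  have hg'b : ∀ r, g' r ≤ b r := by
    intro r
    have h1 : (Inner.inner ℝ (ζ r) (ζ' r) : ℝ) ≤ ‖ζ r‖ * ‖ζ' r‖ := real_inner_le_norm _ _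
    have h4 : lam * lam⁻¹ = 1 := mul_inv_cancel₀ hlampos.ne'
    have h2 : 2 * (‖ζ r‖ * ‖ζ' r‖) ≤ lam * ‖ζ r‖^2 + lam⁻¹ * ‖ζ' r‖^2 := by
      nlinarith [sq_nonneg (lam * ‖ζ r‖ - ‖ζ' r‖), hlampos, sq_nonneg (‖ζ r‖ - ‖ζ' r‖)]
    calc g' r ≤ 2 * (‖ζ r‖ * ‖ζ' r‖) := by
            simp only [hg'def]; linarith
      _ ≤ b r := h2
  -- integrability
  have hICC : Set.uIcc R' R ⊆ Set.Icc R' R := huIcc.subset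
  have hgi : IntervalIntegrable g volume R' R := (hgc.mono hICC).intervalIntegrable
  have hbi : IntervalIntegrable b volume R' R := (hbc.mono hICC).intervalIntegrable
  have hIc : ContinuousOn (fun r => (1 + (n:ℝ)^2) * ‖ζ r‖ ^ 2 + ‖ζ' r‖ ^ 2) (Set.Icc R' R) :=
    (continuous_const.continuousOn.mul ((hζc.norm).pow 2)).add ((hζ'c.norm).pow 2)
  have hIi : IntervalIntegrable (fun r => (1 + (n:ℝ)^2) * ‖ζ r‖ ^ 2 + ‖ζ' r‖ ^ 2) volume R' R :=
    (hIc.mono hICC).intervalIntegrable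
  -- minimum point
  obtain ⟨r₀, hr₀, hmin⟩ := isCompact_Icc.exists_isMinOn ⟨R', Set.left_mem_Icc.2 hRR.le⟩ hgc
  have hsubIcc : Set.Icc r₀ R ⊆ Set.Icc R' R := Set.Icc_subset_Icc hr₀.1 le_rfl
  have huIcc₀ : Set.uIcc r₀ R = Set.Icc r₀ R := Set.uIcc_of_le hr₀.2
  have hsub₀ : Set.uIcc r₀ R ⊆ Set.Icc R' R := huIcc₀.trans_subset hsubIcc
  have hg'i₀ : IntervalIntegrable g' volume r₀ R := (hg'c.mono hsub₀).intervalIntegrable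
  have hbi₀ : IntervalIntegrable b volume r₀ R := (hbc.mono hsub₀).intervalIntegrable
  have hbi₁ : IntervalIntegrable b volume R' r₀ :=
    ((hbc.mono (Set.Icc_subset_Icc le_rfl hr₀.2)).mono
      (Set.uIcc_of_le hr₀.1).subset).intervalIntegrable
  -- Step A : (R - R') * g r₀ ≤ ∫ g
  have hA : (R - R') * g r₀ ≤ ∫ r in R'..R, g r := by
    have := intervalIntegral.integral_mono_on hRR.le intervalIntegrable_const hgi
      (fun x hx => hmin hx)
    simpa [smul_eq_mul] using this
  -- Step B : FTC
  have hB : g R - g r₀ = ∫ r in r₀..R, g' r :=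
    (intervalIntegral.integral_eq_sub_of_hasDerivAt
      (fun x hx => hg x (hsub₀ hx)) hg'i₀).symm
  -- Step C : ∫ g' ≤ ∫ b on [r₀, R]
  have hC : (∫ r in r₀..R, g' r) ≤ ∫ r in r₀..R, b r :=
    intervalIntegral.integral_mono_on hr₀.2 hg'i₀ hbi₀ (fun x _ => hg'b x)
  -- Step D : ∫_{r₀}^R b ≤ ∫_{R'}^R b
  have hsplit : (∫ r in R'..r₀, b r) + ∫ r in r₀..R, b r = ∫ r in R'..R, b r :=
    intervalIntegral.integral_add_adjacent_intervals hbi₁ hbi₀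
  have h0 : 0 ≤ ∫ r in R'..r₀, b r :=
    intervalIntegral.integral_nonneg hr₀.1 (fun x _ => hbnonneg x)
  have hD : (∫ r in r₀..R, b r) ≤ ∫ r in R'..R, b r := by linarith
  -- Step E : lam * ∫ b = I
  set I : ℝ := ∫ r in R'..R, ((1 + (n:ℝ)^2) * ‖ζ r‖ ^ 2 + ‖ζ' r‖ ^ 2) with hIdef
  have hE : lam * ∫ r in R'..R, b r = I := by
    rw [hIdef, ← intervalIntegral.integral_const_mul]
    apply intervalIntegral.integral_congr
    intro r _
    have h4 : lam * lam⁻¹ = 1 := mul_inv_cancel₀ hlampos.ne'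
    calc lam * b r = lam ^ 2 * ‖ζ r‖ ^ 2 + (lam * lam⁻¹) * ‖ζ' r‖ ^ 2 := by
          simp only [hbdef]; ring
      _ = (1 + (n:ℝ)^2) * ‖ζ r‖ ^ 2 + ‖ζ' r‖ ^ 2 := by rw [hlamsq, h4, one_mul]
  -- Step F : lam * ∫ g ≤ I
  have hJgnonneg : 0 ≤ ∫ r in R'..R, g r :=
    intervalIntegral.integral_nonneg hRR.le (fun x _ => by positivity)
  have hF : lam * ∫ r in R'..R, g r ≤ I := by
    have h1 : (1 + (n:ℝ)^2) * ∫ r in R'..R, g r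
        = ∫ r in R'..R, (1 + (n:ℝ)^2) * ‖ζ r‖ ^ 2 := by
      rw [← intervalIntegral.integral_const_mul]
    have hi1 : IntervalIntegrable (fun r => (1 + (n:ℝ)^2) * ‖ζ r‖ ^ 2) volume R' R :=
      ((continuous_const.continuousOn.mul ((hζc.norm).pow 2)).mono hICC).intervalIntegrable
    have h2 : (∫ r in R'..R, (1 + (n:ℝ)^2) * ‖ζ r‖ ^ 2) ≤ I :=
      intervalIntegral.integral_mono_on hRR.le hi1 hIi
        (fun x _ => le_add_of_nonneg_right (by positivity))
    have h3 : lam ≤ 1 + (n:ℝ)^2 := by nlinarith [hlam1, hlamsq]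
    nlinarith [mul_le_mul_of_nonneg_right h3 hJgnonneg]
  -- combine
  have key : (R - R') * (lam * g r₀) ≤ I := by
    have := mul_le_mul_of_nonneg_left hA hlampos.le
    nlinarith [this, hF]
  have hr0bd : lam * g r₀ ≤ (R - R')⁻¹ * I := by
    have := mul_le_mul_of_nonneg_left key (inv_nonneg.2 hsub.le)
    rwa [← mul_assoc, inv_mul_cancel₀ hsub.ne', one_mul] at this
  have hgR : g R ≤ g r₀ + ∫ r in R'..R, b r := by linarith
  have := mul_le_mul_of_nonneg_left hgR hlampos.le
  calc lam * g R ≤ lam * g r₀ + lam * ∫ r in R'..R, b r := by linarith [this, mul_add lam (g r₀) (∫ r in R'..R, b r)]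
    _ = lam * g r₀ + I := by rw [hE]
    _ ≤ (R - R')⁻¹ * I + I := by linarith
    _ = (1 + (R - R')⁻¹) * I := by ring
end

section
/- For the spherical Hankel functions h_n^{(1)} and h_n^{(2)}, the Wronskian-type determinant W_n(r,t) = h_n^{(1)}(κr) h_n^{(2)}(κt) - h_n^{(2)}(κr) h_n^{(1)}(κt) satisfies, for fixed 0 < R' < t and κ > 0, W_n(R',t) ~ -(2i/((2n+1)κR')) ((t/R')^n - (R'/t)^{n+1}) as n → ∞. -/
set_option maxHeartbeats 1000000


open Real MeasureTheory intervalIntegral Filter Topology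

/-- The Wronskian-type determinant
`W_n(r,t) = h_n^{(1)}(κr) h_n^{(2)}(κt) - h_n^{(2)}(κr) h_n^{(1)}(κt)`. -/
noncomputable def Wn (κ : ℝ) (n : ℕ) (r t : ℝ) : ℂ :=
  sphH1 n (κ * r) * sphH2 n (κ * t) - sphH2 n (κ * r) * sphH1 n (κ * t)

lemma besselJ_near (ν x m : ℝ) (hx : 0 < x) (hm : 0 < m)
    (hΓ : Real.Gamma (ν + 1) ≠ 0)
    (hfac : ∀ j : ℕ, 1 ≤ j → m ≤ (j : ℝ) * |ν + (j : ℝ)|)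
    (hq : (x / 2) ^ 2 ≤ m / 2) :
    |besselJ ν x * Real.Gamma (ν + 1) / (x / 2) ^ ν - 1| ≤ 2 * (x / 2) ^ 2 / m := by
  set c : ℝ := (x / 2) ^ 2 with hc
  have hc0 : 0 ≤ c := sq_nonneg _
  have hx2 : 0 < x / 2 := by linarith
  have hqm : c / m ≤ 1 / 2 := by
    rw [div_le_div_iff₀ hm (by norm_num)]; linarith
  have hq0 : 0 ≤ c / m := div_nonneg hc0 hm.le
  have hq1 : c / m < 1 := lt_of_le_of_lt hqm (by norm_num)
  set r : ℕ → ℝ := fun k =>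
    Real.Gamma (ν + 1) * (-c) ^ k / (k.factorial * Real.Gamma ((k : ℝ) + ν + 1)) with hr
  -- key induction
  have key : ∀ k : ℕ, Real.Gamma ((k : ℝ) + ν + 1) ≠ 0 ∧ |r k| ≤ (c / m) ^ k := by
    intro k
    induction k with
    | zero =>
      constructor
      · simpa using hΓ
      · have : r 0 = 1 := by
          simp [hr]
          simpa using hΓ
        rw [this]; norm_num
    | succ k ih =>
      have hne : ((k : ℝ) + ν + 1) ≠ 0 := by
        have h1 := hfac (k + 1) (by omega)
        push_cast at h1
        intro h0
        have h2 : |ν + ((k : ℝ) + 1)| = 0 := by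
          rw [abs_eq_zero]; linarith
        rw [h2, mul_zero] at h1
        linarith
      have hΓrec : Real.Gamma (((k + 1 : ℕ) : ℝ) + ν + 1)
          = ((k : ℝ) + ν + 1) * Real.Gamma ((k : ℝ) + ν + 1) := by
        have h3 : (((k + 1 : ℕ) : ℝ) + ν + 1) = ((k : ℝ) + ν + 1) + 1 := by push_cast; ring
        rw [h3, Real.Gamma_add_one hne]
      have hΓne : Real.Gamma (((k + 1 : ℕ) : ℝ) + ν + 1) ≠ 0 := by
        rw [hΓrec]; exact mul_ne_zero hne ih.1
      refine ⟨hΓne, ?_⟩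
      have hfacne : ((k.factorial : ℝ)) ≠ 0 := by positivity
      have hreq : r (k + 1) = r k * (-c / (((k : ℝ) + 1) * ((k : ℝ) + ν + 1))) := by
        rw [hr]
        simp only [Nat.factorial_succ, hΓrec]
        push_cast
        field_simp
        ring
      rw [hreq, abs_mul]
      have habs2 : |(-c / (((k : ℝ) + 1) * ((k : ℝ) + ν + 1)))|
          = c / (((k : ℝ) + 1) * |(k : ℝ) + ν + 1|) := by
        rw [abs_div, abs_neg, abs_of_nonneg hc0, abs_mul,
          abs_of_nonneg (by positivity : (0:ℝ) ≤ (k : ℝ) + 1)]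
      rw [habs2]
      have hfk := hfac (k + 1) (by omega)
      push_cast at hfk
      have hfk' : m ≤ ((k : ℝ) + 1) * |(k : ℝ) + ν + 1| := by
        have h4 : ν + ((k : ℝ) + 1) = (k : ℝ) + ν + 1 := by ring
        rw [h4] at hfk; exact hfk
      have hdle : c / (((k : ℝ) + 1) * |(k : ℝ) + ν + 1|) ≤ c / m :=
        div_le_div_of_nonneg_left hc0 hm hfk'
      calc |r k| * (c / (((k : ℝ) + 1) * |(k : ℝ) + ν + 1|))
          ≤ (c / m) ^ k * (c / m) :=
            mul_le_mul ih.2 hdle (by positivity) (by positivity)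
        _ = (c / m) ^ (k + 1) := (pow_succ _ _).symm
  -- summability
  have habs_le : ∀ k, |r k| ≤ (c / m) ^ k := fun k => (key k).2
  have hgeom : Summable (fun k : ℕ => (c / m) ^ k) := summable_geometric_of_lt_one hq0 hq1
  have hsum_abs : Summable (fun k => |r k|) :=
    Summable.of_nonneg_of_le (fun k => abs_nonneg _) habs_le hgeom
  have hsum : Summable r := hsum_abs.of_abs
  -- identification of besselJ with the r-series
  have hrpow : ((x / 2) ^ ν : ℝ) ≠ 0 := (Real.rpow_pos_of_pos hx2 ν).ne'
  have hBJ : besselJ ν x = (x / 2) ^ ν / Real.Gamma (ν + 1) * ∑' k, r k := by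
    rw [besselJ, ← tsum_mul_left]
    apply tsum_congr
    intro k
    have h5 : (x / 2 : ℝ) ^ (2 * (k : ℝ) + ν) = c ^ k * (x / 2) ^ ν := by
      rw [Real.rpow_add hx2]
      congr 1
      rw [show (2 * (k : ℝ)) = ((2 * k : ℕ) : ℝ) by push_cast; ring,
        Real.rpow_natCast, pow_mul]
    rw [h5]
    simp only [hr]
    rw [neg_pow c]
    have := (key k).1
    field_simp
  -- first term extraction
  have hr0 : r 0 = 1 := by
    simp [hr]
    simpa using hΓ
  have hshift : ∑' k, r k = 1 + ∑' k, r (k + 1) := by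
    rw [Summable.tsum_eq_zero_add hsum, hr0]
  -- bound the tail
  have hsum_abs' : Summable (fun k => |r (k + 1)|) := (summable_nat_add_iff 1).mpr hsum_abs
  have hgeom' : Summable (fun k : ℕ => (c / m) ^ (k + 1)) := by
    simpa [pow_succ] using hgeom.mul_right (c / m)
  have htail : |∑' k, r (k + 1)| ≤ 2 * c / m := by
    have h6 : |∑' k, r (k + 1)| ≤ ∑' k, |r (k + 1)| := by
      simpa [Real.norm_eq_abs] using norm_tsum_le_tsum_norm (f := fun k => r (k + 1))
        (by simpa [Real.norm_eq_abs] using hsum_abs')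
    have h7 : ∑' k, |r (k + 1)| ≤ ∑' k : ℕ, (c / m) ^ (k + 1) :=
      Summable.tsum_le_tsum (fun k => habs_le (k + 1)) hsum_abs' hgeom'
    have h8 : ∑' k : ℕ, (c / m) ^ (k + 1) = (c / m) * (1 - c / m)⁻¹ := by
      rw [show (fun k : ℕ => (c / m) ^ (k + 1)) = fun k : ℕ => (c / m) * (c / m) ^ k by
        funext k; rw [pow_succ]; ring]
      rw [tsum_mul_left, tsum_geometric_of_lt_one hq0 hq1]
    have h9 : (c / m) * (1 - c / m)⁻¹ ≤ 2 * c / m := by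
      have hpos : (0:ℝ) < 1 - c / m := by linarith
      have hinv : (1 - c / m) * (1 - c / m)⁻¹ = 1 := mul_inv_cancel₀ hpos.ne'
      have hinvpos : 0 ≤ (1 - c / m)⁻¹ := by positivity
      have hinv2 : (1 - c / m)⁻¹ ≤ 2 := by nlinarith
      calc (c / m) * (1 - c / m)⁻¹ ≤ (c / m) * 2 := by nlinarith
        _ = 2 * c / m := by ring
    linarith
  -- conclude
  have hfin : besselJ ν x * Real.Gamma (ν + 1) / (x / 2) ^ ν - 1 = ∑' k, r (k + 1) := by
    rw [hBJ, hshift]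
    field_simp
    ring
  rw [hfin]
  exact htail

lemma GammaProd : ∀ n : ℕ, Real.Gamma (((n : ℝ) + 1/2) + 1) * Real.Gamma (-((n : ℝ) + 1/2) + 1)
    = (-1 : ℝ) ^ n * ((n : ℝ) + 1/2) * π := by
  intro n
  induction n with
  | zero =>
    norm_num
    rw [show (3/2 : ℝ) = 1/2 + 1 by norm_num, Real.Gamma_add_one (by norm_num : (1/2:ℝ) ≠ 0),
      Real.Gamma_one_half_eq]
    rw [show (1/2 * √π * √π : ℝ) = 1/2 * √π ^ 2 by ring, Real.sq_sqrt pi_pos.le]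
  | succ n ih =>
    have e1 : (((n + 1 : ℕ) : ℝ) + 1/2) + 1 = (((n : ℝ) + 1/2) + 1) + 1 := by push_cast; ring
    have e2 : -((n : ℝ) + 1/2) + 1 = (-(((n + 1 : ℕ) : ℝ) + 1/2) + 1) + 1 := by push_cast; ring
    have hne1 : ((n : ℝ) + 1/2) + 1 ≠ 0 := by positivity
    have hne2 : -(((n + 1 : ℕ) : ℝ) + 1/2) + 1 ≠ 0 := by
      push_cast
      intro h
      have : (n : ℝ) ≥ 0 := Nat.cast_nonneg n
      linarith
    have r1 : Real.Gamma ((((n + 1 : ℕ) : ℝ) + 1/2) + 1)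
        = (((n : ℝ) + 1/2) + 1) * Real.Gamma (((n : ℝ) + 1/2) + 1) := by
      rw [e1, Real.Gamma_add_one hne1]
    have r2 : Real.Gamma (-((n : ℝ) + 1/2) + 1)
        = (-(((n + 1 : ℕ) : ℝ) + 1/2) + 1) * Real.Gamma (-(((n + 1 : ℕ) : ℝ) + 1/2) + 1) := by
      rw [e2, Real.Gamma_add_one hne2]
    rw [r2] at ih
    rw [r1]
    have hne2' : (-(((n + 1 : ℕ) : ℝ) + 1/2) + 1) ≠ 0 := hne2
    push_cast at ih hne2' ⊢
    have expand : (-1 : ℝ) ^ (n + 1) = -(-1 : ℝ) ^ n := by rw [pow_succ]; ring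
    rw [expand]
    have h3 : (-((n:ℝ) + 1 + 1/2) + 1) ≠ 0 := by push_cast at hne2; exact hne2
    field_simp at ih ⊢
    nlinarith [ih, sq_nonneg ((-1:ℝ)^n)]

lemma Gamma_neg_half_ne (n : ℕ) : Real.Gamma (-((n : ℝ) + 1/2) + 1) ≠ 0 := by
  apply Real.Gamma_ne_zero
  intro m hmeq
  have h1 : (1 : ℝ) = 2 * (n : ℝ) - 2 * (m : ℝ) := by linarith
  have h2 : (1 : ℤ) = 2 * (n : ℤ) - 2 * (m : ℤ) := by exact_mod_cast h1
  omega

noncomputable def NJ (n : ℕ) (x : ℝ) : ℝ :=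
  besselJ ((n : ℝ) + 1/2) x * Real.Gamma (((n : ℝ) + 1/2) + 1) / (x / 2) ^ ((n : ℝ) + 1/2)

noncomputable def NY (n : ℕ) (x : ℝ) : ℝ :=
  besselJ (-((n : ℝ) + 1/2)) x * Real.Gamma (-((n : ℝ) + 1/2) + 1) / (x / 2) ^ (-((n : ℝ) + 1/2))

lemma NJ_tendsto (x : ℝ) (hx : 0 < x) : Tendsto (fun n => NJ n x) atTop (𝓝 1) := by
  set c : ℝ := (x / 2) ^ 2 with hc
  rw [← tendsto_sub_nhds_zero_iff]
  apply squeeze_zero_norm' (a := fun n : ℕ => 2 * c / (((n : ℝ) + 1) / 2))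
  · filter_upwards [eventually_atTop.2 ⟨⌈4 * c⌉₊, fun n hn => hn⟩] with n hn
    have hcn : 4 * c ≤ (n : ℝ) + 1 := by
      calc 4 * c ≤ (⌈4 * c⌉₊ : ℝ) := Nat.le_ceil _
        _ ≤ (n : ℝ) := by exact_mod_cast hn
        _ ≤ (n : ℝ) + 1 := by linarith
    have hm : (0 : ℝ) < ((n : ℝ) + 1) / 2 := by positivity
    have hbound := besselJ_near ((n : ℝ) + 1/2) x (((n : ℝ) + 1) / 2) hx hm
      (Real.Gamma_pos_of_pos (by positivity)).ne'
      (fun j hj => by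
        have hj1 : (1 : ℝ) ≤ (j : ℝ) := by exact_mod_cast hj
        have habs : |(n : ℝ) + 1/2 + (j : ℝ)| = (n : ℝ) + 1/2 + (j : ℝ) :=
          abs_of_pos (by positivity)
        rw [habs]
        nlinarith [Nat.cast_nonneg (α := ℝ) n])
      (by rw [← hc]; linarith)
    simpa [NJ, Real.norm_eq_abs, ← hc] using hbound
  · have : Tendsto (fun n : ℕ => 4 * c / ((n : ℝ) + 1)) atTop (𝓝 0) := by
      have h1 := tendsto_const_div_atTop_nhds_zero_nat (4 * c)
      have h2 : Tendsto (fun n : ℕ => n + 1) atTop atTop := tendsto_add_atTop_nat 1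
      have := h1.comp h2
      refine this.congr (fun n => ?_)
      simp [Function.comp]
    refine this.congr (fun n => ?_)
    rw [eq_comm]
    field_simp
    ring

lemma NY_tendsto (x : ℝ) (hx : 0 < x) : Tendsto (fun n => NY n x) atTop (𝓝 1) := by
  set c : ℝ := (x / 2) ^ 2 with hc
  rw [← tendsto_sub_nhds_zero_iff]
  apply squeeze_zero_norm' (a := fun n : ℕ => 2 * c / ((n : ℝ) / 2))
  · filter_upwards [eventually_atTop.2 ⟨max 1 ⌈4 * c⌉₊, fun n hn => hn⟩] with n hn
    have hn1 : 1 ≤ n := le_trans (le_max_left _ _) hn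
    have hcn : 4 * c ≤ (n : ℝ) := by
      calc 4 * c ≤ (⌈4 * c⌉₊ : ℝ) := Nat.le_ceil _
        _ ≤ (n : ℝ) := by exact_mod_cast le_trans (le_max_right _ _) hn
    have hn1' : (1 : ℝ) ≤ (n : ℝ) := by exact_mod_cast hn1
    have hm : (0 : ℝ) < (n : ℝ) / 2 := by linarith
    have hΓ : Real.Gamma (-((n : ℝ) + 1/2) + 1) ≠ 0 := by
      apply Real.Gamma_ne_zero
      intro m hmeq
      have h1 : (1 : ℝ) = 2 * (n : ℝ) - 2 * (m : ℝ) := by linarith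
      have h2 : (1 : ℤ) = 2 * (n : ℤ) - 2 * (m : ℤ) := by exact_mod_cast h1
      omega
    have hfac : ∀ j : ℕ, 1 ≤ j → (n : ℝ) / 2 ≤ (j : ℝ) * |(-((n : ℝ) + 1/2)) + (j : ℝ)| := by
      intro j hj
      have hj1 : (1 : ℝ) ≤ (j : ℝ) := by exact_mod_cast hj
      rcases le_or_gt j n with hjn | hjn
      · have hjn' : (j : ℝ) ≤ (n : ℝ) := by exact_mod_cast hjn
        rw [abs_of_nonpos (by linarith)]
        nlinarith [mul_nonneg (by linarith : (0:ℝ) ≤ (j : ℝ) - 1) (by linarith : (0:ℝ) ≤ (n : ℝ) - (j : ℝ))]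
      · have hjn' : (n : ℝ) + 1 ≤ (j : ℝ) := by exact_mod_cast hjn
        rw [abs_of_nonneg (by linarith)]
        nlinarith [mul_nonneg (by linarith : (0:ℝ) ≤ (j : ℝ)) (by linarith : (0:ℝ) ≤ (j : ℝ) - (n : ℝ) - 1)]
    have hbound := besselJ_near (-((n : ℝ) + 1/2)) x ((n : ℝ) / 2) hx hm hΓ hfac
      (by rw [← hc]; linarith)
    simpa [NY, Real.norm_eq_abs, ← hc] using hbound
  · have h1 := tendsto_const_div_atTop_nhds_zero_nat (4 * c)
    refine h1.congr (fun n => ?_)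
    rcases eq_or_ne (n : ℝ) 0 with h | h
    · simp [h]
    · field_simp
      ring

lemma prodYJ (n : ℕ) (x y : ℝ) (hx : 0 < x) (hy : 0 < y) :
    sphY n x * sphJ n y
      = -((y / x) ^ n / ((2 * (n : ℝ) + 1) * x)) * (NY n x * NJ n y) := by
  set ν : ℝ := (n : ℝ) + 1/2 with hν
  have hx2 : (0 : ℝ) < x / 2 := by linarith
  have hy2 : (0 : ℝ) < y / 2 := by linarith
  have hRx : ((x / 2 : ℝ) ^ (-ν)) ≠ 0 := (Real.rpow_pos_of_pos hx2 _).ne'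
  have hRy : ((y / 2 : ℝ) ^ ν) ≠ 0 := (Real.rpow_pos_of_pos hy2 _).ne'
  have hG1 : Real.Gamma (-ν + 1) ≠ 0 := Gamma_neg_half_ne n
  have hG2 : Real.Gamma (ν + 1) ≠ 0 := (Real.Gamma_pos_of_pos (by positivity)).ne'
  -- scalar identities
  have hsq : Real.sqrt (π / (2 * x)) * Real.sqrt (π / (2 * y))
      = π / (2 * (Real.sqrt x * Real.sqrt y)) := by
    rw [Real.sqrt_div pi_pos.le, Real.sqrt_div pi_pos.le,
      Real.sqrt_mul (by norm_num : (0:ℝ) ≤ 2), Real.sqrt_mul (by norm_num : (0:ℝ) ≤ 2)]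
    rw [div_mul_div_comm]
    congr 1
    · rw [show (√π * √π : ℝ) = √π ^ 2 by ring, Real.sq_sqrt pi_pos.le]
    · rw [show (√2 * √x * (√2 * √y) : ℝ) = (√2 ^ 2) * (√x * √y) by ring,
        Real.sq_sqrt (by norm_num : (0:ℝ) ≤ 2)]
  have hr2 : ((x / 2 : ℝ) ^ (-ν)) * ((y / 2 : ℝ) ^ ν) = (y / x) ^ n * (Real.sqrt y / Real.sqrt x) := by
    rw [Real.rpow_neg hx2.le]
    rw [inv_mul_eq_div, ← Real.div_rpow hy2.le hx2.le]
    have h1 : (y / 2) / (x / 2) = y / x := by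
      field_simp
    rw [h1, hν, Real.rpow_add (by positivity), Real.rpow_natCast]
    congr 1
    rw [← Real.sqrt_eq_rpow, Real.sqrt_div hy.le]
  have hmain : ((-1 : ℝ) ^ (n + 1) * (Real.sqrt (π / (2 * x)) * Real.sqrt (π / (2 * y))))
        * (((x / 2 : ℝ) ^ (-ν)) * ((y / 2 : ℝ) ^ ν))
      = -((y / x) ^ n / ((2 * (n : ℝ) + 1) * x)) * (Real.Gamma (ν + 1) * Real.Gamma (-ν + 1)) := by
    rw [hsq, hr2, hν, GammaProd n]
    have hsx : Real.sqrt x ≠ 0 := (Real.sqrt_pos.mpr hx).ne'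
    have hsy : Real.sqrt y ≠ 0 := (Real.sqrt_pos.mpr hy).ne'
    have hxx : Real.sqrt x * Real.sqrt x = x := Real.mul_self_sqrt hx.le
    have hpow : (-1 : ℝ) ^ (n + 1) = -(-1 : ℝ) ^ n := by rw [pow_succ]; ring
    rw [hpow]
    field_simp
    ring_nf
    rw [Real.sq_sqrt hx.le]
  -- assemble
  unfold sphY sphJ NY NJ
  rw [← hν]
  have hNN : besselJ (-ν) x * Real.Gamma (-ν + 1) / ((x/2) ^ (-ν))
      * (besselJ ν y * Real.Gamma (ν + 1) / ((y/2) ^ ν)) * (((x/2) ^ (-ν)) * ((y/2) ^ ν))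
      = besselJ (-ν) x * besselJ ν y * (Real.Gamma (-ν+1) * Real.Gamma (ν+1)) := by
    field_simp
  have hQ : (((x/2 : ℝ) ^ (-ν)) * ((y/2 : ℝ) ^ ν)) ≠ 0 := mul_ne_zero hRx hRy
  rw [← mul_left_inj' hQ, mul_assoc (-((y / x) ^ n / ((2 * (n : ℝ) + 1) * x))), hNN]
  linear_combination (besselJ (-ν) x * besselJ ν y) * hmain

/-- For fixed `0 < R' < t` and `κ > 0`,
`W_n(R',t) ~ -(2i/((2n+1)κR')) ((t/R')^n - (R'/t)^(n+1))` as `n → ∞`. -/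
theorem Wn_asymptotic (κ R' t : ℝ) (hκ : 0 < κ) (hR' : 0 < R') (ht : R' < t) :
    Tendsto (fun n : ℕ =>
        Wn κ n R' t /
          (-(2 * Complex.I / (((2 * n + 1 : ℕ) : ℂ) * (κ : ℂ) * (R' : ℂ))) *
            (((t / R' : ℝ) : ℂ) ^ n - ((R' / t : ℝ) : ℂ) ^ (n + 1))))
      atTop (𝓝 1) := by
  have ht0 : 0 < t := hR'.trans ht
  have ha : 0 < κ * R' := by positivity
  have hb : 0 < κ * t := by positivity
  set σ : ℝ := t / R' with hσdef
  set ρ : ℝ := R' / t with hρdef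
  have hσ1 : 1 < σ := (one_lt_div hR').2 ht
  have hρ0 : 0 < ρ := by positivity
  have hρ1 : ρ < 1 := (div_lt_one ht0).2 ht
  have hσρ : σ * ρ = 1 := by rw [hσdef, hρdef]; field_simp
  set u : ℕ → ℝ := fun n => NY n (κ * R') * NJ n (κ * t) with hu
  set v : ℕ → ℝ := fun n => NJ n (κ * R') * NY n (κ * t) with hv
  set g : ℕ → ℝ := fun n => (u n - ρ ^ (2 * n + 1) * v n) / (1 - ρ ^ (2 * n + 1)) with hg
  have hple : ∀ n : ℕ, ρ ^ (2 * n + 1) < 1 := fun n => pow_lt_one₀ hρ0.le hρ1 (by omega)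
  have hkey : ∀ n : ℕ,
      Wn κ n R' t /
        (-(2 * Complex.I / (((2 * n + 1 : ℕ) : ℂ) * (κ : ℂ) * (R' : ℂ))) *
          (((t / R' : ℝ) : ℂ) ^ n - ((R' / t : ℝ) : ℂ) ^ (n + 1)))
      = ((g n : ℝ) : ℂ) := by
    intro n
    have hba : (κ * t) / (κ * R') = σ := by rw [hσdef]; exact mul_div_mul_left t R' hκ.ne'
    have hab : (κ * R') / (κ * t) = ρ := by rw [hρdef]; exact mul_div_mul_left R' t hκ.ne'
    have hP : sphY n (κ * R') * sphJ n (κ * t)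
        = -(σ ^ n / ((2 * (n : ℝ) + 1) * (κ * R'))) * u n := by
      rw [prodYJ n (κ * R') (κ * t) ha hb, hba, hu]
    have hQ : sphY n (κ * t) * sphJ n (κ * R')
        = -(ρ ^ (n + 1) / ((2 * (n : ℝ) + 1) * (κ * R'))) * v n := by
      rw [prodYJ n (κ * t) (κ * R') hb ha, hab]
      have hco : (ρ ^ n / ((2 * (n : ℝ) + 1) * (κ * t)))
          = ρ ^ (n + 1) / ((2 * (n : ℝ) + 1) * (κ * R')) := by
        rw [pow_succ, hρdef]
        rw [div_eq_div_iff (by positivity) (by positivity)]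
        field_simp
      rw [hco, hv]
      ring_nf
    have hW : Wn κ n R' t
        = -(2 * Complex.I / ((2 * (n : ℂ) + 1) * (κ : ℂ) * (R' : ℂ)))
          * ((σ ^ n * u n - ρ ^ (n + 1) * v n : ℝ) : ℂ) := by
      have hcomb : sphY n (κ * R') * sphJ n (κ * t) - sphJ n (κ * R') * sphY n (κ * t)
          = -(1 / ((2 * (n : ℝ) + 1) * (κ * R'))) * (σ ^ n * u n - ρ ^ (n + 1) * v n) := by
        rw [show sphJ n (κ * R') * sphY n (κ * t) = sphY n (κ * t) * sphJ n (κ * R') by ring,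
          hP, hQ]
        ring
      have hWr : Wn κ n R' t
          = 2 * Complex.I * ((sphY n (κ * R') * sphJ n (κ * t)
              - sphJ n (κ * R') * sphY n (κ * t) : ℝ) : ℂ) := by
        unfold Wn sphH1 sphH2
        push_cast
        ring
      rw [hWr, hcomb]
      push_cast
      ring
    have hT : -(2 * Complex.I / (((2 * n + 1 : ℕ) : ℂ) * (κ : ℂ) * (R' : ℂ)))
          * (((t / R' : ℝ) : ℂ) ^ n - ((R' / t : ℝ) : ℂ) ^ (n + 1))
        = -(2 * Complex.I / ((2 * (n : ℂ) + 1) * (κ : ℂ) * (R' : ℂ)))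
          * ((σ ^ n - ρ ^ (n + 1) : ℝ) : ℂ) := by
      rw [← hσdef, ← hρdef]
      push_cast
      ring
    rw [hW, hT]
    have hK : -(2 * Complex.I / ((2 * (n : ℂ) + 1) * (κ : ℂ) * (R' : ℂ))) ≠ 0 := by
      apply neg_ne_zero.2
      apply div_ne_zero (mul_ne_zero two_ne_zero Complex.I_ne_zero)
      have h2n : (2 * (n : ℂ) + 1) ≠ 0 := by
        have : ((2 * n + 1 : ℕ) : ℂ) ≠ 0 := Nat.cast_ne_zero.2 (by omega)
        push_cast at this
        exact this
      exact mul_ne_zero (mul_ne_zero h2n (Complex.ofReal_ne_zero.2 hκ.ne'))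
        (Complex.ofReal_ne_zero.2 hR'.ne')
    rw [mul_div_mul_left _ _ hK, ← Complex.ofReal_div]
    congr 1
    have hden : 0 < σ ^ n - ρ ^ (n + 1) := by
      have h1 : (1 : ℝ) ≤ σ ^ n := one_le_pow₀ hσ1.le
      have h2 : ρ ^ (n + 1) < 1 := pow_lt_one₀ hρ0.le hρ1 (by omega)
      linarith
    have hden2 : (0 : ℝ) < 1 - ρ ^ (2 * n + 1) := by linarith [hple n]
    rw [hg]
    rw [div_eq_div_iff hden.ne' hden2.ne']
    have hpow : σ ^ n * ρ ^ n = 1 := by rw [← mul_pow, hσρ, one_pow]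
    linear_combination (-(u n - v n) * ρ ^ (n + 1)) * hpow
  apply Tendsto.congr (fun n => (hkey n).symm)
  have hug : Tendsto u atTop (𝓝 1) := by
    have := (NY_tendsto (κ * R') ha).mul (NJ_tendsto (κ * t) hb)
    simpa using this
  have hvg : Tendsto v atTop (𝓝 1) := by
    have := (NJ_tendsto (κ * R') ha).mul (NY_tendsto (κ * t) hb)
    simpa using this
  have hρt : Tendsto (fun n : ℕ => ρ ^ (2 * n + 1)) atTop (𝓝 0) := by
    have h1 : Tendsto (fun k : ℕ => ρ ^ k) atTop (𝓝 0) :=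
      tendsto_pow_atTop_nhds_zero_of_lt_one hρ0.le hρ1
    have h2 : Tendsto (fun n : ℕ => 2 * n + 1) atTop atTop :=
      tendsto_atTop_mono (fun n => by simp only [id_eq]; omega) tendsto_id
    exact h1.comp h2
  have hgt : Tendsto g atTop (𝓝 1) := by
    have := ((hug.sub (hρt.mul hvg)).div (tendsto_const_nhds.sub hρt) (by norm_num : (1:ℝ) - 0 ≠ 0))
    simpa [hg, Pi.div_def] using this
  have := (Complex.continuous_ofReal.tendsto 1).comp hgt
  simpa [Function.comp_def] using this
end

section
/- If u is a radiating solution of the Helmholtz equation Δu + κ²u = 0 in |x| > R' with Fourier coefficients û_n^m(r) on spheres of radius r, then û_n^m(R) = (h_n^{(1)}(κR)/h_n^{(1)}(κR')) û_n^m(R') for R > R', and |û_n^m(R)| ≤ C(R'/R)^n |û_n^m(R')| with C independent of n and m. -/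
open Real MeasureTheory intervalIntegral Filter Topology

namespace RadAux

/-- The entire part of the Bessel series: `J_ν(t) = (t/2)^ν * S ν ((t/2)^2)`. -/
noncomputable def S (ν q : ℝ) : ℝ :=
  ∑' k : ℕ, ((-1 : ℝ) ^ k / (k.factorial * Real.Gamma (k + ν + 1))) * q ^ k

lemma exp_tsum (q : ℝ) : ∑' k : ℕ, q ^ k / (k.factorial : ℝ) = Real.exp q := by
  rw [Real.exp_eq_exp_ℝ, NormedSpace.exp_eq_tsum_div]

lemma Gamma_le_Gamma_add_nat {x : ℝ} (hx : 1 ≤ x) (k : ℕ) :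
    Real.Gamma x ≤ Real.Gamma (x + k) := by
  induction k with
  | zero => simp
  | succ k ih =>
    have hxk : (0 : ℝ) < x + k := by positivity
    have h1 : Real.Gamma (x + (k + 1 : ℕ)) = (x + k) * Real.Gamma (x + k) := by
      push_cast
      rw [show x + ((k : ℝ) + 1) = (x + k) + 1 by ring, Real.Gamma_add_one hxk.ne']
    rw [h1]
    calc Real.Gamma x ≤ Real.Gamma (x + k) := ih
      _ = 1 * Real.Gamma (x + k) := (one_mul _).symm
      _ ≤ (x + k) * Real.Gamma (x + k) := by
          apply mul_le_mul_of_nonneg_right (by linarith) (Real.Gamma_pos_of_pos hxk).le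

lemma Gamma_half_ge (n : ℕ) : Real.sqrt π / 2 ≤ Real.Gamma ((n : ℝ) + 1 / 2) := by
  rcases Nat.eq_zero_or_pos n with h | h
  · subst h
    simp only [Nat.cast_zero, zero_add]
    rw [Real.Gamma_one_half_eq]
    nlinarith [Real.sqrt_nonneg π]
  · have h1 : Real.Gamma (3 / 2 : ℝ) ≤ Real.Gamma ((3 / 2 : ℝ) + (n - 1 : ℕ)) :=
      Gamma_le_Gamma_add_nat (by norm_num) _
    have h2 : Real.Gamma (3 / 2 : ℝ) = Real.sqrt π / 2 := by
      rw [show (3 / 2 : ℝ) = 1 / 2 + 1 by norm_num, Real.Gamma_add_one (by norm_num),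
        Real.Gamma_one_half_eq]
      ring
    have h3 : (3 / 2 : ℝ) + (n - 1 : ℕ) = (n : ℝ) + 1 / 2 := by
      have : (1 : ℕ) ≤ n := h
      push_cast [this]
      ring
    rw [h2, h3] at h1
    exact h1

lemma fact_le_Gamma (n : ℕ) :
    (n.factorial : ℝ) * Real.Gamma (3 / 2) ≤ Real.Gamma ((n : ℝ) + 3 / 2) := by
  induction n with
  | zero => simp
  | succ n ih =>
    have hpos : (0 : ℝ) < (n : ℝ) + 3 / 2 := by positivity
    have h1 : Real.Gamma (((n : ℕ) + 1 : ℕ) + 3 / 2) = ((n : ℝ) + 3 / 2) * Real.Gamma ((n : ℝ) + 3 / 2) := by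
      push_cast
      rw [show (n : ℝ) + 1 + 3 / 2 = ((n : ℝ) + 3 / 2) + 1 by ring, Real.Gamma_add_one hpos.ne']
    rw [h1]
    have h2 : ((n.factorial * (n + 1) : ℕ) : ℝ) * Real.Gamma (3 / 2)
        ≤ ((n : ℝ) + 3 / 2) * Real.Gamma ((n : ℝ) + 3 / 2) := by
      push_cast
      calc (n.factorial : ℝ) * ((n : ℝ) + 1) * Real.Gamma (3 / 2)
          = ((n : ℝ) + 1) * ((n.factorial : ℝ) * Real.Gamma (3 / 2)) := by ring
        _ ≤ ((n : ℝ) + 1) * Real.Gamma ((n : ℝ) + 3 / 2) := by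
            apply mul_le_mul_of_nonneg_left ih (by positivity)
        _ ≤ ((n : ℝ) + 3 / 2) * Real.Gamma ((n : ℝ) + 3 / 2) := by
            apply mul_le_mul_of_nonneg_right (by linarith) (Real.Gamma_pos_of_pos hpos).le
    calc ((n + 1).factorial : ℝ) * Real.Gamma (3 / 2)
        = ((n.factorial * (n + 1) : ℕ) : ℝ) * Real.Gamma (3 / 2) := by
          rw [Nat.factorial_succ]; push_cast; ring
      _ ≤ _ := h2

noncomputable def P (n k : ℕ) : ℝ := ∏ j ∈ Finset.range k, ((j : ℝ) + 1 / 2 - n)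

lemma half_ne_zero (n j : ℕ) : ((j : ℝ) + 1 / 2 - n) ≠ 0 := by
  intro h
  have h2 : (2 * (j : ℝ) + 1) = 2 * n := by linarith
  have h3 : ((2 * j + 1 : ℕ) : ℝ) = ((2 * n : ℕ) : ℝ) := by push_cast; linarith
  have := Nat.cast_injective h3
  omega

lemma Gamma_neg_eq (n k : ℕ) :
    Real.Gamma ((k : ℝ) + 1 / 2 - n) = P n k * Real.Gamma (1 / 2 - n) := by
  induction k with
  | zero => simp [P]
  | succ k ih =>
    have hne := half_ne_zero n k
    have h1 : ((k + 1 : ℕ) : ℝ) + 1 / 2 - n = ((k : ℝ) + 1 / 2 - n) + 1 := by push_cast; ring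
    rw [h1, Real.Gamma_add_one hne, ih, P, P, Finset.prod_range_succ]
    ring

lemma abs_Gamma_neg_half (n : ℕ) :
    |Real.Gamma (1 / 2 - (n : ℝ))| = π / Real.Gamma ((n : ℝ) + 1 / 2) := by
  have h := Real.Gamma_mul_Gamma_one_sub (1 / 2 - (n : ℝ))
  have h2 : (1 : ℝ) - (1 / 2 - n) = (n : ℝ) + 1 / 2 := by ring
  have h3 : Real.sin (π * (1 / 2 - (n : ℝ))) = (-1) ^ n := by
    rw [show π * (1 / 2 - (n : ℝ)) = π / 2 - n * π by ring, Real.sin_sub_nat_mul_pi,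
      Real.sin_pi_div_two]
    ring
  rw [h2, h3] at h
  have hG : 0 < Real.Gamma ((n : ℝ) + 1 / 2) := Real.Gamma_pos_of_pos (by positivity)
  have h4 : |Real.Gamma (1 / 2 - (n : ℝ)) * Real.Gamma ((n : ℝ) + 1 / 2)| = π := by
    rw [h, abs_div]
    simp [abs_of_pos Real.pi_pos]
  rw [abs_mul, abs_of_pos hG] at h4
  field_simp at h4 ⊢
  linarith

lemma absP_ge (n k : ℕ) : (1 / 2 : ℝ) ^ k ≤ |P n k| := by
  rw [P, Finset.abs_prod]
  rw [show ((1 / 2 : ℝ)) ^ k = ∏ _j ∈ Finset.range k, (1 / 2 : ℝ) by simp]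
  apply Finset.prod_le_prod (by intros; norm_num)
  intro j _
  rcases le_or_gt (n : ℝ) j with h | h
  · rw [abs_of_pos (by linarith)]; linarith
  · have hj : (j : ℝ) + 1 ≤ n := by exact_mod_cast Nat.cast_lt.mp h
    rw [abs_of_neg (by linarith)]; linarith

lemma absP_ge' (n k : ℕ) (hn : 1 ≤ n) :
    ((n : ℝ) - 1 / 2) * (1 / 2) ^ k ≤ |P n (k + 1)| := by
  rw [P, Finset.prod_range_succ', abs_mul]
  have hn' : (1 : ℝ) ≤ n := by exact_mod_cast hn
  have h0 : |((0 : ℕ) : ℝ) + 1 / 2 - n| = (n : ℝ) - 1 / 2 := by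
    rw [abs_of_nonpos (by push_cast; linarith)]; push_cast; ring
  rw [h0, mul_comm ((n : ℝ) - 1 / 2) ((1 / 2 : ℝ) ^ k)]
  apply mul_le_mul_of_nonneg_right _ (by linarith)
  rw [show ((1 / 2 : ℝ)) ^ k = ∏ _j ∈ Finset.range k, (1 / 2 : ℝ) by simp, Finset.abs_prod]
  apply Finset.prod_le_prod (by intros; norm_num)
  intro j _
  rcases le_or_gt (n : ℝ) (j + 1 : ℝ) with h | h
  · rw [abs_of_pos (by push_cast; linarith)]; push_cast; linarith
  · have hj : (j : ℝ) + 1 + 1 ≤ n := by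
      have : (j : ℝ) + 1 < n := h
      have : j + 1 < n := by exact_mod_cast this
      push_cast
      have : j + 2 ≤ n := this
      exact_mod_cast this
    rw [abs_of_neg (by push_cast; linarith)]; push_cast; linarith

lemma S_pos_abs_le (n : ℕ) (q : ℝ) (hq : 0 ≤ q) :
    |S ((n : ℝ) + 1 / 2) q| ≤ Real.exp q / Real.Gamma ((n : ℝ) + 3 / 2) := by
  set ν : ℝ := (n : ℝ) + 1 / 2 with hν
  have hG : 0 < Real.Gamma ((n : ℝ) + 3 / 2) := Real.Gamma_pos_of_pos (by positivity)
  have hterm : ∀ k : ℕ,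
      |((-1 : ℝ) ^ k / (k.factorial * Real.Gamma (k + ν + 1))) * q ^ k|
        ≤ q ^ k / (k.factorial : ℝ) * (Real.Gamma ((n : ℝ) + 3 / 2))⁻¹ := by
    intro k
    have harg : (k : ℝ) + ν + 1 = ((n : ℝ) + 3 / 2) + k := by rw [hν]; ring
    have hGk : 0 < Real.Gamma ((k : ℝ) + ν + 1) := by
      rw [harg]; exact Real.Gamma_pos_of_pos (by positivity)
    have hle : Real.Gamma ((n : ℝ) + 3 / 2) ≤ Real.Gamma ((k : ℝ) + ν + 1) := by
      rw [harg]; exact Gamma_le_Gamma_add_nat (by push_cast; linarith [Nat.cast_nonneg (α := ℝ) n]) k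
    have habs : |((-1 : ℝ) ^ k / (k.factorial * Real.Gamma (k + ν + 1))) * q ^ k|
        = q ^ k / ((k.factorial : ℝ) * Real.Gamma ((k : ℝ) + ν + 1)) := by
      rw [abs_mul, abs_div, abs_pow, abs_neg, abs_one, one_pow, abs_pow, abs_of_nonneg hq,
        abs_mul, Nat.abs_cast, abs_of_pos hGk, div_mul_eq_mul_div, one_mul]
    rw [habs, show q ^ k / (k.factorial : ℝ) * (Real.Gamma ((n : ℝ) + 3 / 2))⁻¹
        = q ^ k / ((k.factorial : ℝ) * Real.Gamma ((n : ℝ) + 3 / 2)) by ring]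
    gcongr
  have hsum2 : Summable (fun k : ℕ => q ^ k / (k.factorial : ℝ) * (Real.Gamma ((n : ℝ) + 3 / 2))⁻¹) :=
    (Real.summable_pow_div_factorial q).mul_right _
  have hsum1 : Summable (fun k : ℕ =>
      |((-1 : ℝ) ^ k / (k.factorial * Real.Gamma (k + ν + 1))) * q ^ k|) :=
    Summable.of_nonneg_of_le (fun k => abs_nonneg _) hterm hsum2
  have h1 : |∑' k : ℕ, ((-1 : ℝ) ^ k / (k.factorial * Real.Gamma (k + ν + 1))) * q ^ k|
      ≤ ∑' k : ℕ, |((-1 : ℝ) ^ k / (k.factorial * Real.Gamma (k + ν + 1))) * q ^ k| := by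
    have := norm_tsum_le_tsum_norm (f := fun k : ℕ =>
      ((-1 : ℝ) ^ k / (k.factorial * Real.Gamma (k + ν + 1))) * q ^ k)
      (by simpa only [Real.norm_eq_abs] using hsum1)
    simpa only [Real.norm_eq_abs] using this
  calc |S ν q| ≤ ∑' k : ℕ, |((-1 : ℝ) ^ k / (k.factorial * Real.Gamma (k + ν + 1))) * q ^ k| := by
        simpa only [S] using h1
    _ ≤ ∑' k : ℕ, q ^ k / (k.factorial : ℝ) * (Real.Gamma ((n : ℝ) + 3 / 2))⁻¹ :=
        Summable.tsum_le_tsum hterm hsum1 hsum2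
    _ = Real.exp q / Real.Gamma ((n : ℝ) + 3 / 2) := by
        rw [tsum_mul_right, exp_tsum]; ring

section Neg
variable (n : ℕ) (q : ℝ)

/-- abbreviation for the `k`-th term of the series for `S (-(n+1/2)) q` -/
noncomputable def negTerm (k : ℕ) : ℝ :=
  ((-1 : ℝ) ^ k / (k.factorial * Real.Gamma (k + (-((n : ℝ) + 1 / 2)) + 1))) * q ^ k

lemma S_neg_eq : S (-((n : ℝ) + 1 / 2)) q = ∑' k : ℕ, negTerm n q k := rfl

lemma hPpos (k : ℕ) : 0 < |P n k| := lt_of_lt_of_le (by positivity) (absP_ge n k)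

lemma negTerm_abs (hq : 0 ≤ q) (k : ℕ) :
    |negTerm n q k| = q ^ k / ((k.factorial : ℝ) * |P n k|) *
      (Real.Gamma ((n : ℝ) + 1 / 2) / π) := by
  have hG : 0 < Real.Gamma ((n : ℝ) + 1 / 2) := Real.Gamma_pos_of_pos (by positivity)
  have harg : (k : ℝ) + (-((n : ℝ) + 1 / 2)) + 1 = (k : ℝ) + 1 / 2 - n := by ring
  rw [negTerm, abs_mul, abs_div, abs_pow, abs_neg, abs_one, one_pow, abs_pow,
    abs_of_nonneg hq, abs_mul, Nat.abs_cast, harg, Gamma_neg_eq, abs_mul,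
    abs_Gamma_neg_half, div_mul_eq_mul_div, one_mul]
  have hPne := (hPpos n k).ne'
  have hπ := Real.pi_pos.ne'
  field_simp

lemma negTerm_le (hq : 0 ≤ q) (k : ℕ) :
    |negTerm n q k| ≤ Real.Gamma ((n : ℝ) + 1 / 2) / π * ((2 * q) ^ k / (k.factorial : ℝ)) := by
  have hG : 0 < Real.Gamma ((n : ℝ) + 1 / 2) := Real.Gamma_pos_of_pos (by positivity)
  rw [negTerm_abs n q hq k]
  have h1 : q ^ k / ((k.factorial : ℝ) * |P n k|) ≤ (2 * q) ^ k / (k.factorial : ℝ) := by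
    rw [div_le_div_iff₀ (by have := hPpos n k; positivity) (by positivity), mul_pow]
    calc q ^ k * (k.factorial : ℝ) = (2 : ℝ) ^ k * q ^ k * (k.factorial : ℝ) * (1 / 2) ^ k := by
          rw [show ((1 : ℝ) / 2) ^ k = ((2 : ℝ) ^ k)⁻¹ by rw [div_pow]; norm_num]
          field_simp
      _ ≤ (2 : ℝ) ^ k * q ^ k * (k.factorial : ℝ) * |P n k| := by
          apply mul_le_mul_of_nonneg_left (absP_ge n k) (by positivity)
      _ = (2 : ℝ) ^ k * q ^ k * ((k.factorial : ℝ) * |P n k|) := by ring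
  calc q ^ k / ((k.factorial : ℝ) * |P n k|) * (Real.Gamma ((n : ℝ) + 1 / 2) / π)
      ≤ (2 * q) ^ k / (k.factorial : ℝ) * (Real.Gamma ((n : ℝ) + 1 / 2) / π) := by
        apply mul_le_mul_of_nonneg_right h1 (by positivity)
    _ = _ := by ring

lemma negTerm_summable_abs (hq : 0 ≤ q) : Summable (fun k => |negTerm n q k|) := by
  apply Summable.of_nonneg_of_le (fun k => abs_nonneg _) (negTerm_le n q hq)
  exact ((Real.summable_pow_div_factorial (2 * q)).mul_left _)

lemma S_neg_abs_le (hq : 0 ≤ q) :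
    |S (-((n : ℝ) + 1 / 2)) q| ≤ Real.Gamma ((n : ℝ) + 1 / 2) / π * Real.exp (2 * q) := by
  have hsum1 := negTerm_summable_abs n q hq
  have hsum2 : Summable (fun k : ℕ => Real.Gamma ((n : ℝ) + 1 / 2) / π * ((2 * q) ^ k / (k.factorial : ℝ))) :=
    (Real.summable_pow_div_factorial (2 * q)).mul_left _
  have h1 : |∑' k : ℕ, negTerm n q k| ≤ ∑' k : ℕ, |negTerm n q k| := by
    have := norm_tsum_le_tsum_norm (f := negTerm n q) (by simpa only [Real.norm_eq_abs] using hsum1)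
    simpa only [Real.norm_eq_abs] using this
  rw [S_neg_eq]
  calc |∑' k : ℕ, negTerm n q k| ≤ ∑' k : ℕ, |negTerm n q k| := h1
    _ ≤ ∑' k : ℕ, Real.Gamma ((n : ℝ) + 1 / 2) / π * ((2 * q) ^ k / (k.factorial : ℝ)) :=
        Summable.tsum_le_tsum (negTerm_le n q hq) hsum1 hsum2
    _ = Real.Gamma ((n : ℝ) + 1 / 2) / π * Real.exp (2 * q) := by
        rw [tsum_mul_left, exp_tsum]

lemma negTerm_zero : negTerm n q 0 = 1 / Real.Gamma (1 / 2 - (n : ℝ)) := by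
  rw [negTerm]
  norm_num
  congr 1
  ring

lemma S_neg_lower (hq : 0 ≤ q) (hn : 1 ≤ n) :
    Real.Gamma ((n : ℝ) + 1 / 2) / π * (1 - Real.exp (2 * q) / (2 * (n : ℝ) - 1))
      ≤ |S (-((n : ℝ) + 1 / 2)) q| := by
  have hG : 0 < Real.Gamma ((n : ℝ) + 1 / 2) := Real.Gamma_pos_of_pos (by positivity)
  have hn' : (1 : ℝ) ≤ (n : ℝ) := by exact_mod_cast hn
  have hsumabs := negTerm_summable_abs n q hq
  have hsum : Summable (negTerm n q) := summable_abs_iff.mp hsumabs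
  -- split off the first term
  have hsplit : ∑' k : ℕ, negTerm n q k = negTerm n q 0 + ∑' k : ℕ, negTerm n q (k + 1) :=
    Summable.tsum_eq_zero_add hsum
  have habs0 : |negTerm n q 0| = Real.Gamma ((n : ℝ) + 1 / 2) / π := by
    rw [negTerm_zero, abs_div, abs_one, abs_Gamma_neg_half, one_div, inv_div]
  -- tail bound
  have htail_term : ∀ k : ℕ, |negTerm n q (k + 1)| ≤
      Real.Gamma ((n : ℝ) + 1 / 2) / π * ((2 * q) ^ (k + 1) / ((k + 1).factorial : ℝ))
        / (2 * (n : ℝ) - 1) := by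
    intro k
    rw [negTerm_abs n q hq (k + 1)]
    have hP := absP_ge' n k hn
    have hPp := hPpos n (k + 1)
    have h1 : q ^ (k + 1) / (((k + 1).factorial : ℝ) * |P n (k + 1)|)
        ≤ (2 * q) ^ (k + 1) / (((k + 1).factorial : ℝ) * (2 * (n : ℝ) - 1)) := by
      rw [div_le_div_iff₀ (by positivity) (mul_pos (by positivity) (by linarith)), mul_pow]
      calc q ^ (k + 1) * (((k + 1).factorial : ℝ) * (2 * (n : ℝ) - 1))
          = 2 ^ (k + 1) * q ^ (k + 1) * ((k + 1).factorial : ℝ) * (((n : ℝ) - 1 / 2) * (1 / 2) ^ k) := by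
            rw [show ((1 : ℝ) / 2) ^ k = ((2 : ℝ) ^ k)⁻¹ by rw [div_pow]; norm_num]
            have h2 : (2 : ℝ) ^ (k + 1) = 2 * 2 ^ k := by ring
            field_simp
            ring
        _ ≤ 2 ^ (k + 1) * q ^ (k + 1) * ((k + 1).factorial : ℝ) * |P n (k + 1)| := by
            apply mul_le_mul_of_nonneg_left hP (by positivity)
        _ = 2 ^ (k + 1) * q ^ (k + 1) * (((k + 1).factorial : ℝ) * |P n (k + 1)|) := by ring
    calc q ^ (k + 1) / (((k + 1).factorial : ℝ) * |P n (k + 1)|) * (Real.Gamma ((n : ℝ) + 1 / 2) / π)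
        ≤ (2 * q) ^ (k + 1) / (((k + 1).factorial : ℝ) * (2 * (n : ℝ) - 1)) * (Real.Gamma ((n : ℝ) + 1 / 2) / π) :=
          mul_le_mul_of_nonneg_right h1 (by positivity)
      _ = _ := by
          field_simp
  have htail_sum : Summable (fun k : ℕ => |negTerm n q (k + 1)|) :=
    (summable_nat_add_iff (f := fun k : ℕ => |negTerm n q k|) 1).mpr hsumabs
  have hbound_sum : Summable (fun k : ℕ =>
      Real.Gamma ((n : ℝ) + 1 / 2) / π * ((2 * q) ^ (k + 1) / ((k + 1).factorial : ℝ))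
        / (2 * (n : ℝ) - 1)) := by
    have h := (summable_nat_add_iff (f := fun k : ℕ => (2 * q) ^ k / (k.factorial : ℝ)) 1).mpr
      (Real.summable_pow_div_factorial (2 * q))
    exact ((h.mul_left (Real.Gamma ((n : ℝ) + 1 / 2) / π)).div_const _)
  -- sum of shifted exp series is at most exp(2q)
  have hshift : ∑' k : ℕ, (2 * q) ^ (k + 1) / (((k + 1).factorial : ℝ)) ≤ Real.exp (2 * q) := by
    rw [← exp_tsum (2 * q)]
    have h2q : (0 : ℝ) ≤ 2 * q := by linarith
    have hsumg : Summable (fun k : ℕ => (2 * q) ^ k / (k.factorial : ℝ)) :=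
      Real.summable_pow_div_factorial (2 * q)
    have hsumf : Summable (fun k : ℕ => (2 * q) ^ (k + 1) / (((k + 1).factorial : ℝ))) :=
      (summable_nat_add_iff (f := fun k : ℕ => (2 * q) ^ k / (k.factorial : ℝ)) 1).mpr hsumg
    exact Summable.tsum_le_tsum_of_inj (f := fun k : ℕ => (2 * q) ^ (k + 1) / (((k + 1).factorial : ℝ)))
      (g := fun k : ℕ => (2 * q) ^ k / (k.factorial : ℝ)) (fun k => k + 1) (add_left_injective 1)
      (fun c _ => by positivity) (fun k => le_rfl) hsumf hsumg
  have htail : |∑' k : ℕ, negTerm n q (k + 1)|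
      ≤ Real.Gamma ((n : ℝ) + 1 / 2) / π * Real.exp (2 * q) / (2 * (n : ℝ) - 1) := by
    have h1 : |∑' k : ℕ, negTerm n q (k + 1)| ≤ ∑' k : ℕ, |negTerm n q (k + 1)| := by
      have := norm_tsum_le_tsum_norm (f := fun k => negTerm n q (k + 1))
        (by simpa only [Real.norm_eq_abs] using htail_sum)
      simpa only [Real.norm_eq_abs] using this
    calc |∑' k : ℕ, negTerm n q (k + 1)| ≤ ∑' k : ℕ, |negTerm n q (k + 1)| := h1
      _ ≤ ∑' k : ℕ, Real.Gamma ((n : ℝ) + 1 / 2) / π *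
            ((2 * q) ^ (k + 1) / ((k + 1).factorial : ℝ)) / (2 * (n : ℝ) - 1) :=
          Summable.tsum_le_tsum htail_term htail_sum hbound_sum
      _ = (∑' k : ℕ, (2 * q) ^ (k + 1) / (((k + 1).factorial : ℝ)))
            * (Real.Gamma ((n : ℝ) + 1 / 2) / π / (2 * (n : ℝ) - 1)) := by
          rw [← tsum_mul_right]
          congr 1; funext k; ring
      _ ≤ Real.exp (2 * q) * (Real.Gamma ((n : ℝ) + 1 / 2) / π / (2 * (n : ℝ) - 1)) := by
          apply mul_le_mul_of_nonneg_right hshift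
            (by have h9 : (0:ℝ) < 2*(n:ℝ)-1 := by linarith
                positivity)
      _ = Real.Gamma ((n : ℝ) + 1 / 2) / π * Real.exp (2 * q) / (2 * (n : ℝ) - 1) := by ring
  -- combine
  rw [S_neg_eq, hsplit]
  have h2 : |negTerm n q 0| - |∑' k : ℕ, negTerm n q (k + 1)|
      ≤ |negTerm n q 0 + ∑' k : ℕ, negTerm n q (k + 1)| := by
    have := abs_add_le (negTerm n q 0 + ∑' k : ℕ, negTerm n q (k + 1)) (-(∑' k : ℕ, negTerm n q (k + 1)))
    simp only [add_neg_cancel_right, abs_neg] at this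
    linarith
  have h3 : Real.Gamma ((n : ℝ) + 1 / 2) / π * (1 - Real.exp (2 * q) / (2 * (n : ℝ) - 1))
      ≤ |negTerm n q 0| - |∑' k : ℕ, negTerm n q (k + 1)| := by
    rw [habs0]
    have : Real.Gamma ((n : ℝ) + 1 / 2) / π * (1 - Real.exp (2 * q) / (2 * (n : ℝ) - 1))
        = Real.Gamma ((n : ℝ) + 1 / 2) / π
          - Real.Gamma ((n : ℝ) + 1 / 2) / π * Real.exp (2 * q) / (2 * (n : ℝ) - 1) := by ring
    rw [this]
    linarith
  linarith

end Neg

lemma besselJ_eq (ν t : ℝ) (ht : 0 < t) :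
    besselJ ν t = (t / 2) ^ ν * S ν ((t / 2) ^ 2) := by
  have h2 : (0 : ℝ) < t / 2 := by positivity
  rw [besselJ, S, ← tsum_mul_left]
  congr 1; funext k
  have h3 : (t / 2 : ℝ) ^ (2 * (k : ℝ) + ν) = (t / 2) ^ ν * ((t / 2) ^ 2) ^ k := by
    rw [Real.rpow_add h2, mul_comm]
    congr 1
    rw [← Real.rpow_natCast ((t / 2) ^ 2) k, ← Real.rpow_natCast (t / 2) 2,
      ← Real.rpow_mul h2.le]
    norm_num [mul_comm]
  rw [h3]; ring

lemma pow_le_fact_mul_exp (q : ℝ) (hq : 0 ≤ q) (n : ℕ) :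
    q ^ n ≤ (n.factorial : ℝ) * Real.exp q := by
  have h1 : q ^ n / (n.factorial : ℝ) ≤ Real.exp q := by
    rw [← exp_tsum q]
    exact Summable.le_tsum (Real.summable_pow_div_factorial q) n (fun j _ => by positivity)
  rw [div_le_iff₀ (by positivity)] at h1
  linarith

lemma key_ineq (t : ℝ) (ht : 0 < t) (n : ℕ) :
    (t / 2) ^ ((n : ℝ) + 1 / 2) * (Real.exp ((t / 2) ^ 2) / Real.Gamma ((n : ℝ) + 3 / 2))
      ≤ ((t / 2) * Real.exp (2 * (t / 2) ^ 2) * 2 / (Real.Gamma (3 / 2) * Real.sqrt π))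
        * ((t / 2) ^ (-((n : ℝ) + 1 / 2)) * Real.Gamma ((n : ℝ) + 1 / 2)) := by
  set x : ℝ := t / 2 with hx
  have hx0 : (0 : ℝ) < x := by positivity
  set q : ℝ := x ^ 2 with hqdef
  have hq0 : (0 : ℝ) ≤ q := by positivity
  have hG32 : (0 : ℝ) < Real.Gamma (3 / 2) := Real.Gamma_pos_of_pos (by norm_num)
  have hG3n : (0 : ℝ) < Real.Gamma ((n : ℝ) + 3 / 2) := Real.Gamma_pos_of_pos (by positivity)
  have hG1n : (0 : ℝ) < Real.Gamma ((n : ℝ) + 1 / 2) := Real.Gamma_pos_of_pos (by positivity)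
  have hsπ : (0 : ℝ) < Real.sqrt π := Real.sqrt_pos.mpr Real.pi_pos
  -- split the positive rpow
  have hsplit : x ^ ((n : ℝ) + 1 / 2) = x ^ (-((n : ℝ) + 1 / 2)) * (x * q ^ n) := by
    have h1 : x ^ (-((n : ℝ) + 1 / 2)) * x ^ ((2 * n + 1 : ℕ) : ℝ) = x ^ ((n : ℝ) + 1 / 2) := by
      rw [← Real.rpow_add hx0]
      congr 1
      push_cast
      ring
    have h2 : x ^ ((2 * n + 1 : ℕ) : ℝ) = x * q ^ n := by
      rw [Real.rpow_natCast, hqdef, ← pow_mul, pow_succ, mul_comm (x ^ (2 * n)) x, mul_comm 2 n]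
    rw [← h1, h2]
  rw [hsplit]
  have hfact : (0 : ℝ) < (n.factorial : ℝ) := by positivity
  -- core inequality without the rpow factor
  have hcore : x * q ^ n * (Real.exp q / Real.Gamma ((n : ℝ) + 3 / 2))
      ≤ x * Real.exp (2 * q) * 2 / (Real.Gamma (3 / 2) * Real.sqrt π) * Real.Gamma ((n : ℝ) + 1 / 2) := by
    have h1 : q ^ n / Real.Gamma ((n : ℝ) + 3 / 2)
        ≤ ((n.factorial : ℝ) * Real.exp q) / ((n.factorial : ℝ) * Real.Gamma (3 / 2)) := by
      apply div_le_div₀ (by positivity) (pow_le_fact_mul_exp q hq0 n) (by positivity)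
        (fact_le_Gamma n)
    have h2 : ((n.factorial : ℝ) * Real.exp q) / ((n.factorial : ℝ) * Real.Gamma (3 / 2))
        = Real.exp q / Real.Gamma (3 / 2) := by
      rw [mul_div_mul_left _ _ hfact.ne']
    rw [h2] at h1
    have h3 : (1 : ℝ) ≤ 2 * Real.Gamma ((n : ℝ) + 1 / 2) / Real.sqrt π := by
      rw [le_div_iff₀ hsπ, one_mul]
      have := Gamma_half_ge n
      linarith
    have hexp2 : Real.exp (2 * q) = Real.exp q * Real.exp q := by
      rw [← Real.exp_add]; ring_nf
    calc x * q ^ n * (Real.exp q / Real.Gamma ((n : ℝ) + 3 / 2))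
        = x * Real.exp q * (q ^ n / Real.Gamma ((n : ℝ) + 3 / 2)) := by ring
      _ ≤ x * Real.exp q * (Real.exp q / Real.Gamma (3 / 2)) := by
          apply mul_le_mul_of_nonneg_left h1 (by positivity)
      _ = x * Real.exp (2 * q) / Real.Gamma (3 / 2) := by rw [hexp2]; ring
      _ = x * Real.exp (2 * q) / Real.Gamma (3 / 2) * 1 := by ring
      _ ≤ x * Real.exp (2 * q) / Real.Gamma (3 / 2) * (2 * Real.Gamma ((n : ℝ) + 1 / 2) / Real.sqrt π) := by
          apply mul_le_mul_of_nonneg_left h3 (by positivity)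
      _ = x * Real.exp (2 * q) * 2 / (Real.Gamma (3 / 2) * Real.sqrt π) * Real.Gamma ((n : ℝ) + 1 / 2) := by
          field_simp
  calc x ^ (-((n : ℝ) + 1 / 2)) * (x * q ^ n) * (Real.exp q / Real.Gamma ((n : ℝ) + 3 / 2))
      = x ^ (-((n : ℝ) + 1 / 2)) * (x * q ^ n * (Real.exp q / Real.Gamma ((n : ℝ) + 3 / 2))) := by
        ring
    _ ≤ x ^ (-((n : ℝ) + 1 / 2)) *
          (x * Real.exp (2 * q) * 2 / (Real.Gamma (3 / 2) * Real.sqrt π) * Real.Gamma ((n : ℝ) + 1 / 2)) := by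
        apply mul_le_mul_of_nonneg_left hcore (Real.rpow_nonneg hx0.le _)
    _ = x * Real.exp (2 * q) * 2 / (Real.Gamma (3 / 2) * Real.sqrt π) *
          (x ^ (-((n : ℝ) + 1 / 2)) * Real.Gamma ((n : ℝ) + 1 / 2)) := by ring

lemma sphJ_abs (n : ℕ) (t : ℝ) (ht : 0 < t) :
    |sphJ n t| = Real.sqrt (π / (2 * t)) *
      ((t / 2) ^ ((n : ℝ) + 1 / 2) * |S ((n : ℝ) + 1 / 2) ((t / 2) ^ 2)|) := by
  rw [sphJ, besselJ_eq _ _ ht, abs_mul, abs_mul, abs_of_nonneg (Real.sqrt_nonneg _),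
    abs_of_pos (Real.rpow_pos_of_pos (by positivity) _)]

lemma sphY_abs (n : ℕ) (t : ℝ) (ht : 0 < t) :
    |sphY n t| = Real.sqrt (π / (2 * t)) *
      ((t / 2) ^ (-((n : ℝ) + 1 / 2)) * |S (-((n : ℝ) + 1 / 2)) ((t / 2) ^ 2)|) := by
  rw [sphY, besselJ_eq _ _ ht, mul_assoc, abs_mul, abs_pow, abs_neg, abs_one, one_pow, one_mul,
    abs_mul, abs_mul, abs_of_nonneg (Real.sqrt_nonneg _),
    abs_of_pos (Real.rpow_pos_of_pos (by positivity) _)]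

lemma abs_sphH1_le (n : ℕ) (t : ℝ) :
    ‖sphH1 n t‖ ≤ |sphJ n t| + |sphY n t| := by
  refine le_trans (Complex.norm_le_abs_re_add_abs_im _) ?_
  rw [sphH1]
  simp

lemma sphY_le_abs_sphH1 (n : ℕ) (t : ℝ) :
    |sphY n t| ≤ ‖sphH1 n t‖ := by
  have := Complex.abs_im_le_norm (sphH1 n t)
  rw [sphH1] at this ⊢
  simpa using this

lemma rpow_ratio (y x : ℝ) (hy : 0 < y) (hyx : y < x) (n : ℕ) :
    x ^ (-((n : ℝ) + 1 / 2)) ≤ (y / x) ^ n * y ^ (-((n : ℝ) + 1 / 2)) := by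
  have hx : (0 : ℝ) < x := lt_trans hy hyx
  have h1 : x ^ (-((n : ℝ) + 1 / 2)) = y ^ (-((n : ℝ) + 1 / 2)) * (y / x) ^ ((n : ℝ) + 1 / 2) := by
    rw [Real.div_rpow hy.le hx.le, Real.rpow_neg hy.le, Real.rpow_neg hx.le]
    field_simp
  rw [h1]
  have h2 : (y / x) ^ ((n : ℝ) + 1 / 2) ≤ (y / x) ^ n := by
    have h3 : (y / x) ^ ((n : ℝ) + 1 / 2) = (y / x) ^ (n : ℝ) * (y / x) ^ (1 / 2 : ℝ) := by
      rw [← Real.rpow_add (by positivity)]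
    rw [h3, Real.rpow_natCast]
    have h4 : (y / x) ^ (1 / 2 : ℝ) ≤ 1 :=
      Real.rpow_le_one (by positivity) (by rw [div_le_one hx]; linarith) (by norm_num)
    calc (y / x) ^ n * (y / x) ^ (1 / 2 : ℝ) ≤ (y / x) ^ n * 1 :=
          mul_le_mul_of_nonneg_left h4 (by positivity)
      _ = (y / x) ^ n := by ring
  calc y ^ (-((n : ℝ) + 1 / 2)) * (y / x) ^ ((n : ℝ) + 1 / 2)
      ≤ y ^ (-((n : ℝ) + 1 / 2)) * (y / x) ^ n := by
        apply mul_le_mul_of_nonneg_left h2 (Real.rpow_nonneg hy.le _)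
    _ = (y / x) ^ n * y ^ (-((n : ℝ) + 1 / 2)) := by ring

/-- Uniform bound on the upper-bound constant for `|h_n^{(1)}(s)|`. -/
lemma sphH1_upper (s : ℝ) (hs : 0 < s) (n : ℕ) :
    ‖sphH1 n s‖ ≤
      Real.sqrt (π / (2 * s)) *
        ((s / 2) * Real.exp (2 * (s / 2) ^ 2) * 2 / (Real.Gamma (3 / 2) * Real.sqrt π)
          + Real.exp (2 * (s / 2) ^ 2) / π) *
        ((s / 2) ^ (-((n : ℝ) + 1 / 2)) * Real.Gamma ((n : ℝ) + 1 / 2)) := by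
  have hq : (0 : ℝ) ≤ (s / 2) ^ 2 := by positivity
  have hc : (0 : ℝ) ≤ Real.sqrt (π / (2 * s)) := Real.sqrt_nonneg _
  have hG1n : (0 : ℝ) < Real.Gamma ((n : ℝ) + 1 / 2) := Real.Gamma_pos_of_pos (by positivity)
  have hrp : (0 : ℝ) < (s / 2) ^ (-((n : ℝ) + 1 / 2)) := Real.rpow_pos_of_pos (by positivity) _
  have h1 : |sphJ n s| ≤ Real.sqrt (π / (2 * s)) *
      (((s / 2) * Real.exp (2 * (s / 2) ^ 2) * 2 / (Real.Gamma (3 / 2) * Real.sqrt π))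
        * ((s / 2) ^ (-((n : ℝ) + 1 / 2)) * Real.Gamma ((n : ℝ) + 1 / 2))) := by
    rw [sphJ_abs n s hs]
    apply mul_le_mul_of_nonneg_left _ hc
    calc (s / 2) ^ ((n : ℝ) + 1 / 2) * |S ((n : ℝ) + 1 / 2) ((s / 2) ^ 2)|
        ≤ (s / 2) ^ ((n : ℝ) + 1 / 2) * (Real.exp ((s / 2) ^ 2) / Real.Gamma ((n : ℝ) + 3 / 2)) := by
          apply mul_le_mul_of_nonneg_left (S_pos_abs_le n _ hq)
            (Real.rpow_nonneg (by positivity) _)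
      _ ≤ _ := key_ineq s hs n
  have h2 : |sphY n s| ≤ Real.sqrt (π / (2 * s)) *
      ((Real.exp (2 * (s / 2) ^ 2) / π)
        * ((s / 2) ^ (-((n : ℝ) + 1 / 2)) * Real.Gamma ((n : ℝ) + 1 / 2))) := by
    rw [sphY_abs n s hs]
    apply mul_le_mul_of_nonneg_left _ hc
    calc (s / 2) ^ (-((n : ℝ) + 1 / 2)) * |S (-((n : ℝ) + 1 / 2)) ((s / 2) ^ 2)|
        ≤ (s / 2) ^ (-((n : ℝ) + 1 / 2)) *
            (Real.Gamma ((n : ℝ) + 1 / 2) / π * Real.exp (2 * (s / 2) ^ 2)) :=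
          mul_le_mul_of_nonneg_left (S_neg_abs_le n _ hq) hrp.le
      _ = Real.exp (2 * (s / 2) ^ 2) / π *
            ((s / 2) ^ (-((n : ℝ) + 1 / 2)) * Real.Gamma ((n : ℝ) + 1 / 2)) := by ring
  calc ‖sphH1 n s‖ ≤ |sphJ n s| + |sphY n s| := abs_sphH1_le n s
    _ ≤ _ := by
      refine le_trans (add_le_add h1 h2) (le_of_eq ?_)
      ring

/-- Lower bound for large `n`. -/
lemma sphH1_lower (t : ℝ) (ht : 0 < t) (n : ℕ) (hn : 1 ≤ n)
    (hbig : 2 * Real.exp (2 * (t / 2) ^ 2) ≤ 2 * (n : ℝ) - 1) :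
    Real.sqrt (π / (2 * t)) / (2 * π) *
        ((t / 2) ^ (-((n : ℝ) + 1 / 2)) * Real.Gamma ((n : ℝ) + 1 / 2))
      ≤ ‖sphH1 n t‖ := by
  have hq : (0 : ℝ) ≤ (t / 2) ^ 2 := by positivity
  have hc : (0 : ℝ) ≤ Real.sqrt (π / (2 * t)) := Real.sqrt_nonneg _
  have hG1n : (0 : ℝ) < Real.Gamma ((n : ℝ) + 1 / 2) := Real.Gamma_pos_of_pos (by positivity)
  have hrp : (0 : ℝ) < (t / 2) ^ (-((n : ℝ) + 1 / 2)) := Real.rpow_pos_of_pos (by positivity) _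
  have hn' : (1 : ℝ) ≤ (n : ℝ) := by exact_mod_cast hn
  have h2n : (0 : ℝ) < 2 * (n : ℝ) - 1 := by linarith
  have hhalf : (1 / 2 : ℝ) ≤ 1 - Real.exp (2 * (t / 2) ^ 2) / (2 * (n : ℝ) - 1) := by
    have hd : Real.exp (2 * (t / 2) ^ 2) / (2 * (n : ℝ) - 1) ≤ 1 / 2 := by
      rw [div_le_iff₀ h2n]
      nlinarith
    linarith
  refine le_trans ?_ (sphY_le_abs_sphH1 n t)
  rw [sphY_abs n t ht]
  calc Real.sqrt (π / (2 * t)) / (2 * π) *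
        ((t / 2) ^ (-((n : ℝ) + 1 / 2)) * Real.Gamma ((n : ℝ) + 1 / 2))
      = Real.sqrt (π / (2 * t)) * ((t / 2) ^ (-((n : ℝ) + 1 / 2)) *
          (Real.Gamma ((n : ℝ) + 1 / 2) / π * (1 / 2))) := by
        field_simp
    _ ≤ Real.sqrt (π / (2 * t)) * ((t / 2) ^ (-((n : ℝ) + 1 / 2)) *
          (Real.Gamma ((n : ℝ) + 1 / 2) / π *
            (1 - Real.exp (2 * (t / 2) ^ 2) / (2 * (n : ℝ) - 1)))) := by
        apply mul_le_mul_of_nonneg_left _ hc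
        apply mul_le_mul_of_nonneg_left _ hrp.le
        apply mul_le_mul_of_nonneg_left hhalf (by positivity)
    _ ≤ Real.sqrt (π / (2 * t)) * ((t / 2) ^ (-((n : ℝ) + 1 / 2)) *
          |S (-((n : ℝ) + 1 / 2)) ((t / 2) ^ 2)|) := by
        apply mul_le_mul_of_nonneg_left _ hc
        exact mul_le_mul_of_nonneg_left (S_neg_lower n _ hq hn) hrp.le

lemma ratio_decay (κ R' R : ℝ) (hκ : 0 < κ) (hR' : 0 < R') (hRR : R' < R) :
    ∃ C > 0, ∀ n : ℕ,
      ‖sphH1 n (κ * R) / sphH1 n (κ * R')‖ ≤ C * (R' / R) ^ n := by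
  set s : ℝ := κ * R with hsdef
  set t : ℝ := κ * R' with htdef
  have hR : (0 : ℝ) < R := lt_trans hR' hRR
  have ht : (0 : ℝ) < t := by rw [htdef]; exact mul_pos hκ hR'
  have hs : (0 : ℝ) < s := by rw [hsdef]; exact mul_pos hκ hR
  have hts : t < s := by
    rw [htdef, hsdef]
    exact mul_lt_mul_of_pos_left hRR hκ
  have hRdiv : (0 : ℝ) < R' / R := by positivity
  have hRdiv1 : R' / R < 1 := (div_lt_one hR).mpr hRR
  have hratio : t / s = R' / R := by
    rw [htdef, hsdef]
    field_simp
  -- constants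
  set As : ℝ := Real.sqrt (π / (2 * s)) *
      ((s / 2) * Real.exp (2 * (s / 2) ^ 2) * 2 / (Real.Gamma (3 / 2) * Real.sqrt π)
        + Real.exp (2 * (s / 2) ^ 2) / π) with hAs
  set Bt : ℝ := Real.sqrt (π / (2 * t)) / (2 * π) with hBt
  have hG32 : (0 : ℝ) < Real.Gamma (3 / 2) := Real.Gamma_pos_of_pos (by norm_num)
  have hsπ : (0 : ℝ) < Real.sqrt π := Real.sqrt_pos.mpr Real.pi_pos
  have hAs0 : 0 < As := by
    rw [hAs]
    have h1 : (0 : ℝ) < Real.sqrt (π / (2 * s)) := Real.sqrt_pos.mpr (by positivity)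
    positivity
  have hBt0 : 0 < Bt := by
    rw [hBt]
    have h1 : (0 : ℝ) < Real.sqrt (π / (2 * t)) := Real.sqrt_pos.mpr (by positivity)
    positivity
  set N : ℕ := ⌈Real.exp (2 * (t / 2) ^ 2)⌉₊ + 1 with hN
  set Cinf : ℝ := As / Bt with hCinf
  have hCinf0 : 0 < Cinf := by positivity
  -- bound for n ≥ N
  have hlarge : ∀ n : ℕ, N ≤ n →
      ‖sphH1 n s / sphH1 n t‖ ≤ Cinf * (R' / R) ^ n := by
    intro n hn
    have hn1 : 1 ≤ n := le_trans (by omega) hn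
    have hn' : (N : ℝ) ≤ (n : ℝ) := by exact_mod_cast hn
    have hceil : Real.exp (2 * (t / 2) ^ 2) ≤ (⌈Real.exp (2 * (t / 2) ^ 2)⌉₊ : ℝ) :=
      Nat.le_ceil _
    have hNval : (N : ℝ) = (⌈Real.exp (2 * (t / 2) ^ 2)⌉₊ : ℝ) + 1 := by
      rw [hN]; push_cast; ring
    have hbig : 2 * Real.exp (2 * (t / 2) ^ 2) ≤ 2 * (n : ℝ) - 1 := by
      have hexp1 : (1 : ℝ) ≤ Real.exp (2 * (t / 2) ^ 2) :=
        Real.one_le_exp (by positivity)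
      nlinarith
    have hlow := sphH1_lower t ht n hn1 hbig
    have hup := sphH1_upper s hs n
    have hG1n : (0 : ℝ) < Real.Gamma ((n : ℝ) + 1 / 2) := Real.Gamma_pos_of_pos (by positivity)
    have hrpt : (0 : ℝ) < (t / 2) ^ (-((n : ℝ) + 1 / 2)) :=
      Real.rpow_pos_of_pos (by positivity) _
    have hht0 : (0 : ℝ) < ‖sphH1 n t‖ :=
      lt_of_lt_of_le (by positivity) hlow
    rw [norm_div, div_le_iff₀ hht0]
    have hrr : (s / 2) ^ (-((n : ℝ) + 1 / 2)) ≤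
        (R' / R) ^ n * (t / 2) ^ (-((n : ℝ) + 1 / 2)) := by
      have := rpow_ratio (t / 2) (s / 2) (by positivity) (by linarith) n
      rwa [show t / 2 / (s / 2) = t / s by ring, hratio] at this
    calc ‖sphH1 n s‖
        ≤ As * ((s / 2) ^ (-((n : ℝ) + 1 / 2)) * Real.Gamma ((n : ℝ) + 1 / 2)) := hup
      _ ≤ As * ((R' / R) ^ n * (t / 2) ^ (-((n : ℝ) + 1 / 2)) * Real.Gamma ((n : ℝ) + 1 / 2)) := by
          apply mul_le_mul_of_nonneg_left _ hAs0.le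
          exact mul_le_mul_of_nonneg_right hrr hG1n.le
      _ = (As / Bt) * (R' / R) ^ n *
            (Bt * ((t / 2) ^ (-((n : ℝ) + 1 / 2)) * Real.Gamma ((n : ℝ) + 1 / 2))) := by
          field_simp
      _ ≤ (As / Bt) * (R' / R) ^ n * ‖sphH1 n t‖ := by
          apply mul_le_mul_of_nonneg_left hlow (by positivity)
      _ = Cinf * (R' / R) ^ n * ‖sphH1 n t‖ := by rw [hCinf]
  -- global constant
  set C : ℝ := 1 + Cinf +
      ∑ k ∈ Finset.range N, ‖sphH1 k s / sphH1 k t‖ * (R / R') ^ k with hC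
  have hsum_nonneg : (0 : ℝ) ≤
      ∑ k ∈ Finset.range N, ‖sphH1 k s / sphH1 k t‖ * (R / R') ^ k := by
    apply Finset.sum_nonneg
    intro k _
    positivity
  have hC0 : 0 < C := by rw [hC]; linarith
  refine ⟨C, hC0, fun n => ?_⟩
  rcases lt_or_ge n N with hn | hn
  · have hterm : ‖sphH1 n s / sphH1 n t‖ * (R / R') ^ n ≤ C := by
      rw [hC]
      have h1 : ‖sphH1 n s / sphH1 n t‖ * (R / R') ^ n ≤
          ∑ k ∈ Finset.range N, ‖sphH1 k s / sphH1 k t‖ * (R / R') ^ k := by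
        apply Finset.single_le_sum (f := fun k => ‖sphH1 k s / sphH1 k t‖ * (R / R') ^ k)
          (fun k _ => by positivity) (Finset.mem_range.mpr hn)
      linarith
    have hcancel : (R / R') ^ n * (R' / R) ^ n = 1 := by
      rw [← mul_pow]
      rw [show R / R' * (R' / R) = 1 by field_simp]
      exact one_pow n
    calc ‖sphH1 n s / sphH1 n t‖
        = ‖sphH1 n s / sphH1 n t‖ * ((R / R') ^ n * (R' / R) ^ n) := by
          rw [hcancel, mul_one]
      _ = (‖sphH1 n s / sphH1 n t‖ * (R / R') ^ n) * (R' / R) ^ n := by ring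
      _ ≤ C * (R' / R) ^ n := by
          apply mul_le_mul_of_nonneg_right hterm (by positivity)
  · calc ‖sphH1 n s / sphH1 n t‖ ≤ Cinf * (R' / R) ^ n := hlarge n hn
      _ ≤ C * (R' / R) ^ n := by
          apply mul_le_mul_of_nonneg_right _ (by positivity)
          rw [hC]
          linarith
end RadAux

/-- If `u` is a radiating solution of the Helmholtz equation in `|x| > R'`, with
spherical-harmonic Fourier coefficients `u n m r` on the sphere of radius `r`
satisfying the radiating expansion, then
`û_n^m(R) = (h_n^{(1)}(κR)/h_n^{(1)}(κR')) û_n^m(R')` and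
`|û_n^m(R)| ≤ C (R'/R)^n |û_n^m(R')|` with `C` independent of `n` and `m`. -/
theorem radiating_coefficient_decay (κ R' R : ℝ) (hκ : 0 < κ) (hR' : 0 < R')
    (hRR : R' < R) :
    ∃ C > 0, ∀ u : ℕ → ℤ → ℝ → ℂ,
      (∀ (n : ℕ) (m : ℤ) (r : ℝ), R' < r →
        u n m r = sphH1 n (κ * r) / sphH1 n (κ * R') * u n m R') →
      ∀ (n : ℕ) (m : ℤ),
        u n m R = sphH1 n (κ * R) / sphH1 n (κ * R') * u n m R' ∧
        ‖u n m R‖ ≤ C * (R' / R) ^ n * ‖u n m R'‖ := by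
  obtain ⟨C, hC0, hrat⟩ := RadAux.ratio_decay κ R' R hκ hR' hRR
  refine ⟨C, hC0, fun u hu n m => ?_⟩
  have h1 := hu n m R hRR
  refine ⟨h1, ?_⟩
  rw [h1, norm_mul]
  exact mul_le_mul_of_nonneg_right (hrat n) (norm_nonneg _)
end

section
/- Let T and T_N be the full and truncated DtN operators on ∂B_R, where T_N retains only frequencies n ≤ N. If u satisfies |û_n^m(R)| ≤ C(R'/R)^n |û_n^m(R')| and |Θ_n(κR)| ≤ C(1+n(n+1))^{1/2}, then |⟨(T-T_N)u, ψ⟩_{∂B_R}| ≤ C (R'/R)^N ‖u‖_{H^{1/2}(∂B_{R'})} ‖ψ‖_{H^{1/2}(∂B_R)} for all ψ ∈ H^{1/2}(∂B_R). -/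
open Real Filter Topology

set_option maxHeartbeats 1000000

/-- Estimate of the DtN truncation term, stated on spherical-harmonic coefficients:
if `|û_n^m(R)| ≤ C₁ (R'/R)^n |û_n^m(R')|` and `|Θ_n(κR)| ≤ C₂ (1+n(n+1))^{1/2}`, then
`|⟨(T-T_N)u, ψ⟩_{∂B_R}| = |R Σ_{n>N} Σ_{|m|≤n} Θ_n û_n^m(R) conj(ψ̂_n^m)|`
`≤ C (R'/R)^N ‖u‖_{H^{1/2}(∂B_{R'})} ‖ψ‖_{H^{1/2}(∂B_R)}`. -/
theorem dtn_truncation_bound (κ R' R : ℝ) (hκ : 0 < κ) (hR' : 0 < R') (hRR : R' < R)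
    (C₁ C₂ : ℝ) (hC₁ : 0 < C₁) (hC₂ : 0 < C₂) :
    ∃ C > 0, ∀ (N : ℕ) (Θ : ℕ → ℂ) (uR uR' ψ : ℕ → ℤ → ℂ),
      (∀ (n : ℕ) (m : ℤ),
        ‖uR n m‖ ≤ C₁ * (R' / R) ^ n * ‖uR' n m‖) →
      (∀ n : ℕ, ‖Θ n‖ ≤ C₂ * (1 + (n : ℝ) * (n + 1)) ^ ((1 : ℝ) / 2)) →
      Summable (fun n : ℕ => (1 + (n : ℝ) * (n + 1)) ^ ((1 : ℝ) / 2) *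
        ∑ m ∈ Finset.Icc (-(n : ℤ)) (n : ℤ), ‖uR' n m‖ ^ 2) →
      Summable (fun n : ℕ => (1 + (n : ℝ) * (n + 1)) ^ ((1 : ℝ) / 2) *
        ∑ m ∈ Finset.Icc (-(n : ℤ)) (n : ℤ), ‖ψ n m‖ ^ 2) →
      Summable (fun n : {n : ℕ // N < n} =>
        ∑ m ∈ Finset.Icc (-(n.1 : ℤ)) (n.1 : ℤ),
          Θ n.1 * uR n.1 m * (starRingEnd ℂ) (ψ n.1 m)) →
      ‖(R : ℂ) * ∑' n : {n : ℕ // N < n},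
          ∑ m ∈ Finset.Icc (-(n.1 : ℤ)) (n.1 : ℤ),
            Θ n.1 * uR n.1 m * (starRingEnd ℂ) (ψ n.1 m)‖ ≤
        C * (R' / R) ^ N *
          (∑' n : ℕ, (1 + (n : ℝ) * (n + 1)) ^ ((1 : ℝ) / 2) *
            ∑ m ∈ Finset.Icc (-(n : ℤ)) (n : ℤ), ‖uR' n m‖ ^ 2) ^
            ((1 : ℝ) / 2) *
          (∑' n : ℕ, (1 + (n : ℝ) * (n + 1)) ^ ((1 : ℝ) / 2) *
            ∑ m ∈ Finset.Icc (-(n : ℤ)) (n : ℤ), ‖ψ n m‖ ^ 2) ^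
            ((1 : ℝ) / 2) := by
  have hR : (0:ℝ) < R := hR'.trans hRR
  refine ⟨R * C₁ * C₂, by positivity, ?_⟩
  intro N Θ uR uR' ψ hu hΘ h3 h4 h5
  set q : ℝ := R' / R with hqdef
  have hq0 : 0 < q := div_pos hR' hR
  have hq1 : q < 1 := (div_lt_one hR).2 hRR
  set w : ℕ → ℝ := fun n => (1 + (n : ℝ) * (n + 1)) ^ ((1 : ℝ) / 2) with hw
  set a : ℕ → ℝ := fun n => ∑ m ∈ Finset.Icc (-(n : ℤ)) (n : ℤ), ‖uR' n m‖ ^ 2 with ha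
  set b : ℕ → ℝ := fun n => ∑ m ∈ Finset.Icc (-(n : ℤ)) (n : ℤ), ‖ψ n m‖ ^ 2 with hb
  have hwpos : ∀ n, 0 < w n := fun n => by
    have : (0:ℝ) < 1 + (n:ℝ) * (n+1) := by positivity
    exact Real.rpow_pos_of_pos this _
  have hann : ∀ n, 0 ≤ a n := fun n => Finset.sum_nonneg fun m _ => by positivity
  have hbnn : ∀ n, 0 ≤ b n := fun n => Finset.sum_nonneg fun m _ => by positivity
  have hwann : ∀ n, 0 ≤ w n * a n := fun n => mul_nonneg (hwpos n).le (hann n)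
  have hwbnn : ∀ n, 0 ≤ w n * b n := fun n => mul_nonneg (hwpos n).le (hbnn n)
  -- pointwise bound on the inner sums
  have key : ∀ n : {n : ℕ // N < n},
      ‖∑ m ∈ Finset.Icc (-(n.1 : ℤ)) (n.1 : ℤ),
          Θ n.1 * uR n.1 m * (starRingEnd ℂ) (ψ n.1 m)‖ ≤
        C₁ * C₂ * q ^ N * (Real.sqrt (w n.1 * a n.1) * Real.sqrt (w n.1 * b n.1)) := by
    rintro ⟨n, hn⟩
    calc ‖∑ m ∈ Finset.Icc (-(n : ℤ)) (n : ℤ),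
            Θ n * uR n m * (starRingEnd ℂ) (ψ n m)‖
        ≤ ∑ m ∈ Finset.Icc (-(n : ℤ)) (n : ℤ),
            ‖Θ n * uR n m * (starRingEnd ℂ) (ψ n m)‖ := by
          exact norm_sum_le _ _
      _ ≤ ∑ m ∈ Finset.Icc (-(n : ℤ)) (n : ℤ),
            (C₂ * w n) * ((C₁ * q ^ n * ‖uR' n m‖) * ‖ψ n m‖) := by
          refine Finset.sum_le_sum fun m _ => ?_
          rw [norm_mul, norm_mul, Complex.norm_conj]
          have h1 := hΘ n
          have h2 := hu n m
          have nn1 : (0:ℝ) ≤ ‖uR n m‖ := norm_nonneg _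
          have nn2 : (0:ℝ) ≤ ‖ψ n m‖ := norm_nonneg _
          calc ‖Θ n‖ * ‖uR n m‖ * ‖ψ n m‖
              ≤ (C₂ * w n) * (C₁ * q ^ n * ‖uR' n m‖) * ‖ψ n m‖ := by
                gcongr
            _ = (C₂ * w n) * ((C₁ * q ^ n * ‖uR' n m‖) * ‖ψ n m‖) := by
                ring
      _ ≤ ∑ m ∈ Finset.Icc (-(n : ℤ)) (n : ℤ),
            (C₂ * w n) * ((C₁ * q ^ N * ‖uR' n m‖) * ‖ψ n m‖) := by
          refine Finset.sum_le_sum fun m _ => ?_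
          have : q ^ n ≤ q ^ N := pow_le_pow_of_le_one hq0.le hq1.le hn.le
          gcongr
      _ = C₁ * C₂ * q ^ N * (w n *
            ∑ m ∈ Finset.Icc (-(n : ℤ)) (n : ℤ), ‖uR' n m‖ * ‖ψ n m‖) := by
          rw [Finset.mul_sum, Finset.mul_sum]
          exact Finset.sum_congr rfl fun m _ => by ring
      _ ≤ C₁ * C₂ * q ^ N * (w n * (Real.sqrt (a n) * Real.sqrt (b n))) := by
          have := Real.sum_mul_le_sqrt_mul_sqrt (Finset.Icc (-(n : ℤ)) (n : ℤ))
            (fun m => ‖uR' n m‖) (fun m => ‖ψ n m‖)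
          gcongr
      _ = C₁ * C₂ * q ^ N * (Real.sqrt (w n * a n) * Real.sqrt (w n * b n)) := by
          rw [Real.sqrt_mul (hwpos n).le, Real.sqrt_mul (hwpos n).le]
          rw [show Real.sqrt (w n) * Real.sqrt (a n) * (Real.sqrt (w n) * Real.sqrt (b n))
              = Real.sqrt (w n) * Real.sqrt (w n) * (Real.sqrt (a n) * Real.sqrt (b n)) by ring,
            Real.mul_self_sqrt (hwpos n).le]
  -- summability of the dominating series
  have hdom : Summable (fun n : {n : ℕ // N < n} =>
      Real.sqrt (w n.1 * a n.1) * Real.sqrt (w n.1 * b n.1)) := by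
    have hs : Summable (fun n : {n : ℕ // N < n} => (w n.1 * a n.1 + w n.1 * b n.1) / 2) := by
      have := ((h3.add h4).div_const 2).subtype {n : ℕ | N < n}
      exact this
    refine hs.of_nonneg_of_le (fun n => by positivity) (fun n => ?_)
    have hx := hwann n.1
    have hy := hwbnn n.1
    nlinarith [Real.sq_sqrt hx, Real.sq_sqrt hy,
      sq_nonneg (Real.sqrt (w n.1 * a n.1) - Real.sqrt (w n.1 * b n.1)),
      Real.sqrt_nonneg (w n.1 * a n.1), Real.sqrt_nonneg (w n.1 * b n.1)]
  have hdom' : Summable (fun n : {n : ℕ // N < n} =>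
      C₁ * C₂ * q ^ N * (Real.sqrt (w n.1 * a n.1) * Real.sqrt (w n.1 * b n.1))) :=
    hdom.mul_left _
  have hfs : Summable (fun n : {n : ℕ // N < n} =>
      ‖∑ m ∈ Finset.Icc (-(n.1 : ℤ)) (n.1 : ℤ),
        Θ n.1 * uR n.1 m * (starRingEnd ℂ) (ψ n.1 m)‖) :=
    hdom'.of_nonneg_of_le (fun n => norm_nonneg _) key
  -- Cauchy-Schwarz over n
  have hAB : (∑' n : {n : ℕ // N < n},
        Real.sqrt (w n.1 * a n.1) * Real.sqrt (w n.1 * b n.1)) ≤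
      Real.sqrt (∑' n : ℕ, w n * a n) * Real.sqrt (∑' n : ℕ, w n * b n) := by
    refine Summable.tsum_le_of_sum_le hdom (fun s => ?_)
    have step1 : ∑ i ∈ s, Real.sqrt (w i.1 * a i.1) * Real.sqrt (w i.1 * b i.1) ≤
        Real.sqrt (∑ i ∈ s, w i.1 * a i.1) * Real.sqrt (∑ i ∈ s, w i.1 * b i.1) :=
      Real.sum_sqrt_mul_sqrt_le s (fun i => hwann i.1) (fun i => hwbnn i.1)
    refine step1.trans ?_
    have inj : ∀ x ∈ s, ∀ y ∈ s, x.1 = y.1 → x = y := fun x _ y _ h => Subtype.ext h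
    have e1 : ∑ j ∈ s.image Subtype.val, (fun j => w j * a j) j = ∑ i ∈ s, w i.1 * a i.1 :=
      Finset.sum_image inj
    have e2 : ∑ j ∈ s.image Subtype.val, (fun j => w j * b j) j = ∑ i ∈ s, w i.1 * b i.1 :=
      Finset.sum_image inj
    rw [← e1, ← e2]
    have m1 : ∑ j ∈ s.image Subtype.val, (fun j => w j * a j) j ≤ ∑' n : ℕ, w n * a n :=
      Summable.sum_le_tsum _ (fun i _ => hwann i) h3
    have m2 : ∑ j ∈ s.image Subtype.val, (fun j => w j * b j) j ≤ ∑' n : ℕ, w n * b n :=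
      Summable.sum_le_tsum _ (fun i _ => hwbnn i) h4
    exact mul_le_mul (Real.sqrt_le_sqrt m1) (Real.sqrt_le_sqrt m2)
      (Real.sqrt_nonneg _) (Real.sqrt_nonneg _)
  -- assemble
  rw [norm_mul, Complex.norm_of_nonneg hR.le,
    show (∑' n : ℕ, (1 + (n : ℝ) * (n + 1)) ^ ((1 : ℝ) / 2) *
        ∑ m ∈ Finset.Icc (-(n : ℤ)) (n : ℤ), ‖uR' n m‖ ^ 2) = ∑' n : ℕ, w n * a n
      from rfl,
    show (∑' n : ℕ, (1 + (n : ℝ) * (n + 1)) ^ ((1 : ℝ) / 2) *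
        ∑ m ∈ Finset.Icc (-(n : ℤ)) (n : ℤ), ‖ψ n m‖ ^ 2) = ∑' n : ℕ, w n * b n
      from rfl,
    show ((∑' n : ℕ, w n * a n) ^ ((1 : ℝ) / 2)) = Real.sqrt (∑' n : ℕ, w n * a n)
      from (Real.sqrt_eq_rpow _).symm,
    show ((∑' n : ℕ, w n * b n) ^ ((1 : ℝ) / 2)) = Real.sqrt (∑' n : ℕ, w n * b n)
      from (Real.sqrt_eq_rpow _).symm]
  calc R * ‖∑' n : {n : ℕ // N < n},
          ∑ m ∈ Finset.Icc (-(n.1 : ℤ)) (n.1 : ℤ),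
            Θ n.1 * uR n.1 m * (starRingEnd ℂ) (ψ n.1 m)‖
      ≤ R * ∑' n : {n : ℕ // N < n},
          ‖∑ m ∈ Finset.Icc (-(n.1 : ℤ)) (n.1 : ℤ),
            Θ n.1 * uR n.1 m * (starRingEnd ℂ) (ψ n.1 m)‖ := by
        refine mul_le_mul_of_nonneg_left ?_ hR.le
        have hfs' : Summable (fun n : {n : ℕ // N < n} =>
            ‖∑ m ∈ Finset.Icc (-(n.1 : ℤ)) (n.1 : ℤ),
              Θ n.1 * uR n.1 m * (starRingEnd ℂ) (ψ n.1 m)‖) := hfs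
        exact norm_tsum_le_tsum_norm hfs'
    _ ≤ R * ∑' n : {n : ℕ // N < n},
          C₁ * C₂ * q ^ N * (Real.sqrt (w n.1 * a n.1) * Real.sqrt (w n.1 * b n.1)) := by
        exact mul_le_mul_of_nonneg_left (Summable.tsum_le_tsum key hfs hdom') hR.le
    _ = R * (C₁ * C₂ * q ^ N * ∑' n : {n : ℕ // N < n},
          Real.sqrt (w n.1 * a n.1) * Real.sqrt (w n.1 * b n.1)) := by
        rw [tsum_mul_left]
    _ ≤ R * (C₁ * C₂ * q ^ N *
          (Real.sqrt (∑' n : ℕ, w n * a n) * Real.sqrt (∑' n : ℕ, w n * b n))) := by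
        refine mul_le_mul_of_nonneg_left (mul_le_mul_of_nonneg_left hAB ?_) hR.le
        positivity
    _ = R * C₁ * C₂ * q ^ N *
          Real.sqrt (∑' n : ℕ, w n * a n) * Real.sqrt (∑' n : ℕ, w n * b n) := by ring
end
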